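/- Let f be a type function and S ∈ 𝓟_f^0. Then at least one of S^↓ and S^↑ is a chain. Moreover, if S^↓ is a chain, then the rank ρ_f(S) of S in 𝓟_f equals the length of the chain S^↓ (i.e. |S^↓| − 1). -/

import Mathlib

open Classical

namespace HOT

/-- Binary strings of length `n`, identified with `{0,1}^n`. -/
abbrev Str (n : ℕ) := Fin n → Bool

/-- The all-zeros string `θ`. -/
def theta (n : ℕ) : Str n := fun _ => false

/-- `𝓕_n`: boolean functions on `{0,1}^n` with `f(θ) = 1`. -/
def Fcal (n : ℕ) : Set (Str n → Bool) := {f | f (theta n) = true}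

/-- The complement `f* = 1 - f + p_n`. -/
noncomputable def star {n : ℕ} (f : Str n → Bool) : Str n → Bool :=
  fun s => if s = theta n then true else !(f s)

/-- First block `s¹` of a string `s ∈ {0,1}^{m+n}`. -/
def fstStr {m n : ℕ} (s : Str (m + n)) : Str m := fun i => s (Fin.castAdd n i)

/-- Second block `s²` of a string `s ∈ {0,1}^{m+n}`. -/
def sndStr {m n : ℕ} (s : Str (m + n)) : Str n := fun j => s (Fin.natAdd m j)

/-- Tensor product `(f ⊗ g)(s) = f(s¹) · g(s²)`. -/
noncomputable def tensor {m n : ℕ} (f : Str m → Bool) (g : Str n → Bool) :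
    Str (m + n) → Bool :=
  fun s => f (fstStr s) && g (sndStr s)

/-- `f ⅋ g := (f* ⊗ g*)*`. -/
noncomputable def parr {m n : ℕ} (f : Str m → Bool) (g : Str n → Bool) :
    Str (m + n) → Bool :=
  star (tensor (star f) (star g))

/-- The causal product `f ◁ g` (`f` on the first `m` bits, `g` on the last `n` bits):
`(f ◁ g)(s) = f(s¹)` if `s¹ ≠ θ_m`, else `g(s²)`. -/
noncomputable def causalL {m n : ℕ} (f : Str m → Bool) (g : Str n → Bool) :
    Str (m + n) → Bool :=
  fun s => if fstStr s = theta m then g (sndStr s) else f (fstStr s)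

/-- The causal product `g ◁ f` (`f` on the first `m` bits, `g` on the last `n` bits):
`(g ◁ f)(s) = g(s²)` if `s² ≠ θ_n`, else `f(s¹)`. -/
noncomputable def causalR {m n : ℕ} (f : Str m → Bool) (g : Str n → Bool) :
    Str (m + n) → Bool :=
  fun s => if sndStr s = theta n then f (fstStr s) else g (sndStr s)

/-- `p_T(s) = 1` iff `s_i = 0` for all `i ∈ T`. -/
noncomputable def pSet {n : ℕ} (T : Set (Fin n)) : Str n → Bool :=
  fun s => decide (∀ i ∈ T, s i = false)

/-- The string `e^i` with `1` exactly in position `i`. -/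
def eStr {n : ℕ} (i : Fin n) : Str n := fun j => decide (j = i)

/-- The string `e^{i,j}` with `1` exactly in positions `i` and `j`. -/
def e2Str {n : ℕ} (i j : Fin n) : Str n := fun l => decide (l = i ∨ l = j)

/-- Input indices `I_f = {i : f(e^i) = 0}`. -/
def Iset {n : ℕ} (f : Str n → Bool) : Set (Fin n) := {i | f (eStr i) = false}

/-- Output indices `O_f = {j : f(e^j) = 1}`. -/
def Oset {n : ℕ} (f : Str n → Bool) : Set (Fin n) := {j | f (eStr j) = true}

/-- `f` is a subtype if `p_{I_f} ≤ f ≤ (p_{O_f})*` pointwise. -/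
def IsSubtype {n : ℕ} (f : Str n → Bool) : Prop :=
  pSet (Iset f) ≤ f ∧ f ≤ star (pSet (Oset f))

/-- The partial order `≤_O`: `s ≤_O t` iff `s_i ≤ t_i` for `i ∈ O` and `s_i ≥ t_i` for
`i ∉ O`. -/
def leO {n : ℕ} (O : Set (Fin n)) (s t : Str n) : Prop :=
  ∀ i, (i ∈ O → s i ≤ t i) ∧ (i ∉ O → t i ≤ s i)

/-- `f` is monotone (with respect to `≤_{O_f}`). -/
def MonotoneF {n : ℕ} (f : Str n → Bool) : Prop :=
  ∀ s t, leO (Oset f) s t → f s ≤ f t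

/-- The action of a permutation on strings: `σ(s)_i = s_{σ⁻¹(i)}`. -/
def permAct {n : ℕ} (σ : Equiv.Perm (Fin n)) (s : Str n) : Str n := fun i => s (σ⁻¹ i)

/-- `(f ∘ σ)(s) = f(σ(s))`. -/
def permComp {n : ℕ} (f : Str n → Bool) (σ : Equiv.Perm (Fin n)) : Str n → Bool :=
  fun s => f (permAct σ s)

/-- The inductively defined family `𝓣_n` of type functions. -/
inductive IsType : (n : ℕ) → (Str n → Bool) → Prop
  | one : IsType 1 (fun _ => true)
  | dual {n : ℕ} {f : Str n → Bool} : IsType n f → IsType n (star f)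
  | perm {n : ℕ} {f : Str n → Bool} (σ : Equiv.Perm (Fin n)) :
      IsType n f → IsType n (permComp f σ)
  | tens {m n : ℕ} {f : Str m → Bool} {g : Str n → Bool} :
      IsType m f → IsType n g → IsType (m + n) (tensor f g)

/-- Interpretation of a bit as an integer. -/
def toZ (b : Bool) : ℤ := (b.toNat : ℤ)

/-- `f` is a chain type: `f = Σ_{i=0}^N (-1)^i p_{S_i}` for a strictly increasing chain
`S_0 ⊊ ⋯ ⊊ S_N ⊆ [n]` with `N` even. -/
def IsChainType {n : ℕ} (f : Str n → Bool) : Prop :=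
  ∃ N : ℕ, Even N ∧ ∃ S : Fin (N + 1) → Set (Fin n), StrictMono S ∧
    ∀ s : Str n, toZ (f s) = ∑ i : Fin (N + 1), (-1 : ℤ) ^ (i : ℕ) * toZ (pSet (S i) s)

/-- The Möbius transform `f̂_T`. -/
noncomputable def mobius {n : ℕ} (f : Str n → Bool) (T : Set (Fin n)) : ℤ :=
  ∑ s : Str n, if ∀ j, j ∉ T → s j = true then
    (-1 : ℤ) ^ (∑ j : Fin n, if j ∈ T then (s j).toNat else 0) * toZ (f s)
  else 0

/-- The structure poset `𝓟_f = {T ⊆ [n] : f̂_T ≠ 0}`, ordered by inclusion. -/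
noncomputable def structPoset {n : ℕ} (f : Str n → Bool) : Set (Set (Fin n)) :=
  {T | mobius f T ≠ 0}

/-- The label set `L_T = T ∖ ⋃ {S ∈ 𝓟_f : S ⊊ T}`. -/
noncomputable def labels {n : ℕ} (f : Str n → Bool) (T : Set (Fin n)) : Set (Fin n) :=
  T \ ⋃₀ {S | S ∈ structPoset f ∧ S ⊂ T}

/-- The reduced structure poset `𝓟_f^0`: `∅` (if `∅ ∈ 𝓟_f`) together with all
`T ∈ 𝓟_f` with `L_T ≠ ∅`. -/
noncomputable def reducedPoset {n : ℕ} (f : Str n → Bool) : Set (Set (Fin n)) :=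
  {T | T ∈ structPoset f ∧ (T = ∅ ∨ labels f T ≠ ∅)}

/-- The rank `ρ_f(T)`: the length of a longest chain in `𝓟_f` with top element `T`
(this is the length of any maximal such chain in the graded poset `𝓟_f`). -/
noncomputable def rank {n : ℕ} (f : Str n → Bool) (T : Set (Fin n)) : ℕ :=
  sSup {k | ∃ c : Fin (k + 1) → Set (Fin n), StrictMono c ∧
    (∀ i, c i ∈ structPoset f) ∧ c (Fin.last k) = T}

/-- The rank `r(f)` of the whole poset `𝓟_f`: the common length of its maximal chains. -/
noncomputable def rk {n : ℕ} (f : Str n → Bool) : ℕ :=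
  sSup {k | ∃ c : Fin (k + 1) → Set (Fin n), StrictMono c ∧ ∀ i, c i ∈ structPoset f}

/-- `𝕋_i^f = {T ∈ 𝓟_f : i ∈ L_T}`. -/
noncomputable def Tset {n : ℕ} (f : Str n → Bool) (i : Fin n) : Set (Set (Fin n)) :=
  {T | T ∈ structPoset f ∧ i ∈ labels f T}

/-- The rank `r_f(i)` of an index: the common rank of elements of `𝕋_i^f`, or `r(f)+1`
if `𝕋_i^f = ∅` (a free output). -/
noncomputable def idxRank {n : ℕ} (f : Str n → Bool) (i : Fin n) : ℕ :=
  if (Tset f i).Nonempty then sSup (rank f '' Tset f i) else rk f + 1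

/-- `X` is the greatest lower bound of `S` and `T` in the poset `(P, ⊆)`. -/
def IsGLBIn {n : ℕ} (P : Set (Set (Fin n))) (S T X : Set (Fin n)) : Prop :=
  X ∈ P ∧ X ⊆ S ∧ X ⊆ T ∧ ∀ Y ∈ P, Y ⊆ S → Y ⊆ T → Y ⊆ X

/-- `X` is the least upper bound of `S` and `T` in the poset `(P, ⊆)`. -/
def IsLUBIn {n : ℕ} (P : Set (Set (Fin n))) (S T X : Set (Fin n)) : Prop :=
  X ∈ P ∧ S ⊆ X ∧ T ⊆ X ∧ ∀ Y ∈ P, S ⊆ Y → T ⊆ Y → X ⊆ Y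

/-- `S^↓`: the downset generated by `S` in `𝓟_f^0`. -/
noncomputable def downSet {n : ℕ} (f : Str n → Bool) (S : Set (Fin n)) :
    Set (Set (Fin n)) :=
  {X | X ∈ reducedPoset f ∧ X ⊆ S}

/-- `S^↑`: the upset generated by `S` in `𝓟_f^0`. -/
noncomputable def upSet {n : ℕ} (f : Str n → Bool) (S : Set (Fin n)) :
    Set (Set (Fin n)) :=
  {X | X ∈ reducedPoset f ∧ S ⊆ X}

/-- The pair rank `r_f(i,j)`: `max{ρ_f(S ∧ T) : S ∈ 𝕋_i^f, T ∈ 𝕋_j^f, S ∧ T exists in 𝓟_f}`;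
`-1` if this set is empty, unless `i` or `j` is a free output, in which case it is
`min{r_f(i), r_f(j)}`. -/
noncomputable def pairRank {n : ℕ} (f : Str n → Bool) (i j : Fin n) : ℤ :=
  if _h : ∃ r : ℤ, ∃ S ∈ Tset f i, ∃ T ∈ Tset f j, ∃ X, IsGLBIn (structPoset f) S T X ∧
      r = (rank f X : ℤ) then
    sSup {r : ℤ | ∃ S ∈ Tset f i, ∃ T ∈ Tset f j, ∃ X, IsGLBIn (structPoset f) S T X ∧
      r = (rank f X : ℤ)}
  else if Tset f i = ∅ ∨ Tset f j = ∅ then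
    min (idxRank f i : ℤ) (idxRank f j : ℤ)
  else -1

/-- Membership in the sublattice generated by a set `S`. -/
inductive InLatGen {α : Type*} [Lattice α] (S : Set α) : α → Prop
  | base {a : α} : a ∈ S → InLatGen S a
  | sup {a b : α} : InLatGen S a → InLatGen S b → InLatGen S (a ⊔ b)
  | inf {a b : α} : InLatGen S a → InLatGen S b → InLatGen S (a ⊓ b)

/-- For `s ≰_O θ`, `f_s` is the function with support `U_s ∪ U_θ` (w.r.t. `≤_O`). -/
noncomputable def fStr {n : ℕ} (O : Set (Fin n)) (s : Str n) : Str n → Bool :=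
  fun t => decide (leO O s t ∨ leO O (theta n) t)

/-- A string `s ∉ D_θ ∪ U_θ` is basic (for `≤_O`) if `s_j = 1` for exactly one `j ∈ O`
and `s_i = 0` for at most one `i ∈ I = Oᶜ`. -/
def IsBasic {n : ℕ} (O : Set (Fin n)) (s : Str n) : Prop :=
  ¬ leO O s (theta n) ∧ ¬ leO O (theta n) s ∧
  (∃! j, j ∈ O ∧ s j = true) ∧
  (∀ i i', i ∈ Oᶜ → i' ∈ Oᶜ → s i = false → s i' = false → i = i')


/-! ### Abstract poset development -/

section AbstractPoset

variable {n : ℕ}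

/-- Lengths of strict chains in `P` with top `T`. -/
def chainsTo (P : Set (Set (Fin n))) (T : Set (Fin n)) : Set ℕ :=
  {k | ∃ c : Fin (k + 1) → Set (Fin n), StrictMono c ∧ (∀ i, c i ∈ P) ∧ c (Fin.last k) = T}

noncomputable def hgt (P : Set (Set (Fin n))) (T : Set (Fin n)) : ℕ := sSup (chainsTo P T)

lemma rank_eq_hgt (f : Str n → Bool) (T : Set (Fin n)) : rank f T = hgt (structPoset f) T := rfl

def lab (P : Set (Set (Fin n))) (T : Set (Fin n)) : Set (Fin n) :=
  T \ ⋃₀ {S | S ∈ P ∧ S ⊂ T}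

lemma labels_eq_lab (f : Str n → Bool) (T : Set (Fin n)) : labels f T = lab (structPoset f) T :=
  rfl

def red (P : Set (Set (Fin n))) : Set (Set (Fin n)) :=
  {T | T ∈ P ∧ (T = ∅ ∨ lab P T ≠ ∅)}

lemma reduced_eq_red (f : Str n → Bool) : reducedPoset f = red (structPoset f) := rfl

def dwn (P : Set (Set (Fin n))) (S : Set (Fin n)) : Set (Set (Fin n)) :=
  {X | X ∈ red P ∧ X ⊆ S}

def ups (P : Set (Set (Fin n))) (S : Set (Fin n)) : Set (Set (Fin n)) :=
  {X | X ∈ red P ∧ S ⊆ X}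

lemma downSet_eq_dwn (f : Str n → Bool) (S : Set (Fin n)) :
    downSet f S = dwn (structPoset f) S := rfl

lemma upSet_eq_ups (f : Str n → Bool) (S : Set (Fin n)) :
    upSet f S = ups (structPoset f) S := rfl

variable {P Q : Set (Set (Fin n))} {S T : Set (Fin n)}

lemma chainsTo_le {k : ℕ} (hk : k ∈ chainsTo P T) : k ≤ n := by
  obtain ⟨c, hc, -, -⟩ := hk
  have key : ∀ i : Fin (k + 1), (i : ℕ) ≤ (c i).ncard := by
    intro i
    induction i using Fin.induction with
    | zero => simp
    | succ j ih =>
      have h1 : c j.castSucc ⊂ c j.succ := hc (Fin.castSucc_lt_succ : j.castSucc < j.succ)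
      have h2 := Set.ncard_lt_ncard h1 (Set.toFinite _)
      have h3 : (j.castSucc : ℕ) = (j : ℕ) := rfl
      have h4 : (j.succ : ℕ) = (j : ℕ) + 1 := rfl
      omega
  have h2 := key (Fin.last k)
  have h3 : (c (Fin.last k)).ncard ≤ n := by
    have := Set.ncard_le_ncard (Set.subset_univ (c (Fin.last k))) (Set.toFinite _)
    simpa [Set.ncard_univ] using this
  simpa using h2.trans h3

lemma bddAbove_chainsTo : BddAbove (chainsTo P T) :=
  ⟨n, fun _ hk => chainsTo_le hk⟩

lemma zero_mem_chainsTo (hT : T ∈ P) : 0 ∈ chainsTo P T := by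
  refine ⟨fun _ => T, ?_, fun _ => hT, rfl⟩
  intro a b hab
  exfalso
  have h1 := a.isLt
  have h2 := b.isLt
  rw [Fin.lt_def] at hab
  omega

lemma le_hgt {k : ℕ} (hk : k ∈ chainsTo P T) : k ≤ hgt P T :=
  le_csSup bddAbove_chainsTo hk

lemma hgt_le {m : ℕ} (hT : T ∈ P) (h : ∀ k ∈ chainsTo P T, k ≤ m) : hgt P T ≤ m :=
  csSup_le ⟨0, zero_mem_chainsTo hT⟩ h

lemma hgt_mem (hT : T ∈ P) : hgt P T ∈ chainsTo P T :=
  Nat.sSup_mem ⟨0, zero_mem_chainsTo hT⟩ bddAbove_chainsTo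

lemma chain_le_top {k : ℕ} {c : Fin (k + 1) → Set (Fin n)} (hc : StrictMono c)
    (hl : c (Fin.last k) = T) (i : Fin (k + 1)) : c i ⊆ T :=
  hl ▸ hc.monotone (Fin.le_last i)

lemma strictMono_snoc {k : ℕ} {c : Fin (k + 1) → Set (Fin n)} (hc : StrictMono c)
    (hT : c (Fin.last k) ⊂ T) : StrictMono (Fin.snoc c T : Fin (k + 2) → Set (Fin n)) := by
  intro a b hab
  rcases Fin.eq_castSucc_or_eq_last b with ⟨b', rfl⟩ | rfl
  · rcases Fin.eq_castSucc_or_eq_last a with ⟨a', rfl⟩ | rfl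
    · simp only [Fin.snoc_castSucc]
      exact hc (Fin.castSucc_lt_castSucc_iff.mp hab)
    · exact absurd hab (by
        have hb := b'.isLt
        rw [Fin.lt_def]
        simp only [Fin.val_last, Fin.coe_castSucc]
        omega)
  · rcases Fin.eq_castSucc_or_eq_last a with ⟨a', rfl⟩ | rfl
    · have h1 : c a' ≤ c (Fin.last k) := hc.monotone (Fin.le_last a')
      simp only [Fin.snoc_castSucc, Fin.snoc_last]
      exact lt_of_le_of_lt h1 hT
    · exact absurd hab (lt_irrefl _)

lemma strictMono_cons {k : ℕ} {c : Fin (k + 1) → Set (Fin n)} (hc : StrictMono c)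
    {B : Set (Fin n)} (hB : B < c 0) :
    StrictMono (Fin.cons B c : Fin (k + 2) → Set (Fin n)) := by
  intro a b hab
  rcases Fin.eq_zero_or_eq_succ b with rfl | ⟨b', rfl⟩
  · exact absurd hab (by simp)
  · rcases Fin.eq_zero_or_eq_succ a with rfl | ⟨a', rfl⟩
    · simp only [Fin.cons_zero, Fin.cons_succ]
      exact lt_of_lt_of_le hB (hc.monotone (Fin.zero_le b'))
    · simp only [Fin.cons_succ]
      exact hc (by rwa [Fin.succ_lt_succ_iff] at hab)

lemma hgt_lt_of_ssubset (hS : S ∈ P) (hT : T ∈ P) (hST : S ⊂ T) :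
    hgt P S + 1 ≤ hgt P T := by
  obtain ⟨c, hc, hm, hl⟩ := hgt_mem hS
  refine le_hgt ⟨Fin.snoc c T, strictMono_snoc hc (by rw [hl]; exact hST), ?_, ?_⟩
  · intro i
    rcases Fin.eq_castSucc_or_eq_last i with ⟨i', rfl⟩ | rfl
    · simpa using hm i'
    · simpa using hT
  · simp

lemma hgt_mono (hS : S ∈ P) (hT : T ∈ P) (hST : S ⊆ T) : hgt P S ≤ hgt P T := by
  rcases eq_or_ssubset_of_subset hST with rfl | h
  · exact le_rfl
  · have := hgt_lt_of_ssubset hS hT h; omega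

lemma hgt_eq_zero (hT : T ∈ P) (h : ∀ X ∈ P, X ⊆ T → X = T) : hgt P T = 0 := by
  refine Nat.le_zero.mp (hgt_le hT ?_)
  rintro k ⟨c, hc, hm, hl⟩
  by_contra hk
  have h0 : c 0 = T := h _ (hm 0) (chain_le_top hc hl 0)
  have hlt : (0 : Fin (k + 1)) < Fin.last k := by
    rw [Fin.lt_def]
    simp only [Fin.val_zero, Fin.val_last]
    omega
  have := hc hlt
  rw [h0, hl] at this
  exact lt_irrefl _ this

lemma chainsTo_congr (h : ∀ X, X ⊆ T → (X ∈ P ↔ X ∈ Q)) : chainsTo P T = chainsTo Q T := by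
  ext k
  constructor
  · rintro ⟨c, hc, hm, hl⟩
    exact ⟨c, hc, fun i => (h _ (chain_le_top hc hl i)).mp (hm i), hl⟩
  · rintro ⟨c, hc, hm, hl⟩
    exact ⟨c, hc, fun i => (h _ (chain_le_top hc hl i)).mpr (hm i), hl⟩

lemma hgt_congr (h : ∀ X, X ⊆ T → (X ∈ P ↔ X ∈ Q)) : hgt P T = hgt Q T := by
  unfold hgt; rw [chainsTo_congr h]

lemma hgt_insert_empty (h0 : ∅ ∉ P) (hT : T ∈ P) (hTne : T ≠ ∅) :
    hgt (insert ∅ P) T = hgt P T + 1 := by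
  apply le_antisymm
  · refine hgt_le (Set.mem_insert_of_mem _ hT) ?_
    rintro k ⟨c, hc, hm, hl⟩
    by_cases hc0 : c 0 = ∅
    · have hkpos : k ≠ 0 := by
        rintro rfl
        refine hTne ?_
        rw [← hl]
        have e : (Fin.last 0) = (0 : Fin 1) := rfl
        rw [e, hc0]
      obtain ⟨k', rfl⟩ : ∃ k', k = k' + 1 := ⟨k - 1, by omega⟩
      set c' : Fin (k' + 1) → Set (Fin n) := fun i => c ⟨(i : ℕ) + 1, by omega⟩ with hc'
      have hc'm : StrictMono c' := by
        intro a b hab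
        exact hc (by rw [Fin.mk_lt_mk]; exact Nat.succ_lt_succ (Fin.lt_def.mp hab))
      have hmem' : ∀ i : Fin (k' + 1), c' i ∈ P := by
        intro i
        have hlt0 : (0 : Fin (k' + 1 + 1)) < ⟨(i : ℕ) + 1, by omega⟩ := by
          rw [Fin.lt_def]; simp only [Fin.val_zero]; omega
        have hss := hc hlt0
        rw [hc0] at hss
        rcases Set.mem_insert_iff.mp (hm ⟨(i : ℕ) + 1, by omega⟩) with h | h
        · exfalso; rw [← h] at hss; exact lt_irrefl _ hss
        · exact h
      have hlast' : c' (Fin.last k') = T := by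
        have e : (⟨((Fin.last k' : ℕ)) + 1, by omega⟩ : Fin (k' + 1 + 1)) = Fin.last (k' + 1) := by
          ext
          simp
        show c ⟨((Fin.last k' : ℕ)) + 1, by omega⟩ = T
        rw [e, hl]
      have : k' ∈ chainsTo P T := ⟨c', hc'm, hmem', hlast'⟩
      have := le_hgt this
      omega
    · have : ∀ i, c i ∈ P := by
        intro i
        have hne : c i ≠ ∅ := by
          intro he
          rcases eq_or_lt_of_le (Fin.zero_le i) with rfl | hlt
          · exact hc0 he
          · have := hc hlt
            rw [he] at this
            exact hc0 (Set.subset_empty_iff.mp this.le)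
        rcases Set.mem_insert_iff.mp (hm i) with h | h
        · exact absurd h hne
        · exact h
      exact le_hgt ⟨c, hc, this, hl⟩ |>.trans (by omega)
  · obtain ⟨c, hc, hm, hl⟩ := hgt_mem hT
    have h0lt : (∅ : Set (Fin n)) < c 0 := by
      have : c 0 ≠ ∅ := fun he => h0 (he ▸ hm 0)
      exact (Set.empty_ssubset.mpr (Set.nonempty_iff_ne_empty.mpr this))
    refine le_hgt ⟨Fin.cons ∅ c, strictMono_cons hc h0lt, ?_, ?_⟩
    · intro i
      rcases Fin.eq_zero_or_eq_succ i with rfl | ⟨i', rfl⟩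
      · simp
      · simpa using Set.mem_insert_of_mem _ (hm i')
    · rw [← Fin.succ_last, Fin.cons_succ]; exact hl

lemma hgt_top_step (hT : T ∈ P) {M : Set (Fin n)} (hM : M ∈ P) (hMT : M ⊂ T)
    (hmax : ∀ X ∈ P, X ⊂ T → X ⊆ M) : hgt P T = hgt P M + 1 := by
  apply le_antisymm
  · refine hgt_le hT ?_
    rintro k ⟨c, hc, hm, hl⟩
    rcases Nat.eq_zero_or_pos k with rfl | hk
    · omega
    · obtain ⟨k', rfl⟩ : ∃ k', k = k' + 1 := ⟨k - 1, by omega⟩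
      set c' : Fin (k' + 1) → Set (Fin n) := fun i => c ⟨(i : ℕ), by omega⟩ with hc'def
      have hc'm : StrictMono c' := by
        intro a b hab
        exact hc (by rw [Fin.mk_lt_mk]; exact Fin.lt_def.mp hab)
      have hend : c' (Fin.last k') ⊂ T := by
        rw [← hl]
        exact hc (by rw [Fin.lt_def]; simp)
      have hsub : c' (Fin.last k') ⊆ M := hmax _ (hm _) hend
      have h1 : k' ≤ hgt P (c' (Fin.last k')) := le_hgt ⟨c', hc'm, fun i => hm _, rfl⟩
      have h2 : hgt P (c' (Fin.last k')) ≤ hgt P M := hgt_mono (hm _) hM hsub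
      omega
  · exact hgt_lt_of_ssubset hM hT hMT

lemma hgt_le_embed {N : ℕ} {Q : Set (Set (Fin N))} (φ : Set (Fin n) → Set (Fin N))
    (hmono : ∀ X Y, X ∈ P → Y ∈ P → X ⊆ S → Y ⊆ S → X ⊂ Y → φ X ⊂ φ Y)
    (hmem : ∀ X, X ∈ P → X ⊆ S → φ X ∈ Q) (hS : S ∈ P) :
    hgt P S ≤ hgt Q (φ S) := by
  obtain ⟨c, hc, hm, hl⟩ := hgt_mem hS
  have hsub : ∀ i, c i ⊆ S := chain_le_top hc hl
  refine le_hgt ⟨fun i => φ (c i), ?_, fun i => hmem _ (hm i) (hsub i), ?_⟩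
  swap
  · show φ (c (Fin.last _)) = φ S
    rw [hl]
  intro a b hab
  exact hmono _ _ (hm a) (hm b) (hsub a) (hsub b) (hc hab)

end AbstractPoset


section RedLemmas

variable {n : ℕ} {P Q : Set (Set (Fin n))} {S T : Set (Fin n)}

lemma red_subset : red P ⊆ P := fun _ h => h.1

lemma empty_mem_red (h : ∅ ∈ P) : ∅ ∈ red P := ⟨h, Or.inl rfl⟩

lemma minimal_mem_red (hT : T ∈ P) (h : ∀ X ∈ P, X ⊆ T → X = T) : T ∈ red P := by
  rcases eq_or_ne T ∅ with rfl | hne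
  · exact ⟨hT, Or.inl rfl⟩
  · refine ⟨hT, Or.inr ?_⟩
    have he : {S | S ∈ P ∧ S ⊂ T} = ∅ := by
      ext X
      simp only [Set.mem_setOf_eq, Set.mem_empty_iff_false, iff_false, not_and]
      intro hX hXT
      exact hXT.ne (h X hX hXT.subset)
    rw [lab, he]
    simpa using hne

lemma exists_red_below (hT : T ∈ P) {i : Fin n} (hi : i ∈ T) :
    ∃ M ∈ red P, M ⊆ T ∧ i ∈ lab P M := by
  obtain ⟨M, hM, hmin⟩ := Set.Finite.exists_minimalFor id {X | X ∈ P ∧ X ⊆ T ∧ i ∈ X}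
      (Set.toFinite _) ⟨T, hT, le_refl _, hi⟩
  obtain ⟨hMP, hMT, hiM⟩ := hM
  have hlab : i ∈ lab P M := by
    refine ⟨hiM, ?_⟩
    rintro ⟨X, ⟨hXP, hXM⟩, hiX⟩
    exact hXM.ne (subset_antisymm hXM.subset (hmin ⟨hXP, hXM.subset.trans hMT, hiX⟩ hXM.subset))
  refine ⟨M, ⟨hMP, Or.inr ?_⟩, hMT, hlab⟩
  exact fun he => (he ▸ hlab : i ∈ (∅ : Set (Fin n)))

lemma exists_min_below (hT : T ∈ P) :
    ∃ M ∈ red P, M ⊆ T ∧ ∀ X ∈ P, X ⊆ M → X = M := by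
  obtain ⟨M, hM, hmin⟩ := Set.Finite.exists_minimalFor id {X | X ∈ P ∧ X ⊆ T}
      (Set.toFinite _) ⟨T, hT, le_refl _⟩
  obtain ⟨hMP, hMT⟩ := hM
  have hminP : ∀ X ∈ P, X ⊆ M → X = M := fun X hX hXM =>
    subset_antisymm hXM (hmin ⟨hX, hXM.trans hMT⟩ hXM)
  exact ⟨M, minimal_mem_red hMP hminP, hMT, hminP⟩

lemma dwn_nonempty (hT : T ∈ P) : (dwn P T).Nonempty := by
  obtain ⟨M, hM, hMT, -⟩ := exists_min_below hT
  exact ⟨M, hM, hMT⟩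

lemma subset_sUnion_red (hT : T ∈ P) : T ⊆ ⋃₀ red P := by
  intro i hi
  obtain ⟨M, hM, -, hlab⟩ := exists_red_below hT hi
  exact ⟨M, hM, hlab.1⟩

lemma chain_red_greatest (hch : IsChain (· ⊆ ·) (red P)) (hP : P.Nonempty) :
    ∃ M ∈ red P, (∀ X ∈ red P, X ⊆ M) ∧ ∀ T ∈ P, T ⊆ M := by
  obtain ⟨T0, hT0⟩ := hP
  obtain ⟨M0, hM0, -, -⟩ := exists_min_below hT0
  obtain ⟨M, hM, hmax⟩ := Set.Finite.exists_maximalFor id (red P) (Set.toFinite _) ⟨M0, hM0⟩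
  have hub : ∀ X ∈ red P, X ⊆ M := by
    intro X hX
    rcases eq_or_ne X M with rfl | hne
    · exact le_refl _
    · rcases hch hX hM hne with h | h
      · exact h
      · exact hmax hX h
  refine ⟨M, hM, hub, ?_⟩
  intro T hT i hi
  obtain ⟨M', hM', -, hlab⟩ := exists_red_below hT hi
  exact hub M' hM' hlab.1

lemma isChain_image {N : ℕ} (φ : Set (Fin n) → Set (Fin N)) (s : Set (Set (Fin n)))
    (h : ∀ X ∈ s, ∀ Y ∈ s, X ⊆ Y ↔ φ X ⊆ φ Y) :
    IsChain (· ⊆ ·) (φ '' s) ↔ IsChain (· ⊆ ·) s := by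
  constructor
  · intro hch X hX Y hY hne
    have hne2 : φ X ≠ φ Y := fun e =>
      hne (subset_antisymm ((h X hX Y hY).mpr e.le) ((h Y hY X hX).mpr e.ge))
    rcases hch (Set.mem_image_of_mem φ hX) (Set.mem_image_of_mem φ hY) hne2 with h1 | h1
    · exact Or.inl ((h X hX Y hY).mpr h1)
    · exact Or.inr ((h Y hY X hX).mpr h1)
  · intro hch
    rintro _ ⟨X, hX, rfl⟩ _ ⟨Y, hY, rfl⟩ hne
    rcases eq_or_ne X Y with rfl | hne'
    · exact absurd rfl hne
    · rcases hch hX hY hne' with h1 | h1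
      · exact Or.inl ((h X hX Y hY).mp h1)
      · exact Or.inr ((h Y hY X hX).mp h1)

lemma isChain_insert_comparable {s : Set (Set (Fin n))} {a : Set (Fin n)}
    (hch : IsChain (· ⊆ ·) s) (h : ∀ x ∈ s, x ⊆ a ∨ a ⊆ x) :
    IsChain (· ⊆ ·) (insert a s) :=
  hch.insert fun b hb _ => (h b hb).symm

end RedLemmas

section MobiusLemmas

variable {n : ℕ}

lemma toZ_and (x y : Bool) : toZ (x && y) = toZ x * toZ y := by
  cases x <;> cases y <;> rfl

/-- The sign-sum (Möbius transform of the constant-one function). -/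
lemma mobius_one (T : Set (Fin n)) :
    mobius (fun _ => true : Str n → Bool) T = if T = ∅ then 1 else 0 := by
  rcases eq_or_ne T ∅ with rfl | hne
  · rw [if_pos rfl]
    unfold mobius
    rw [Finset.sum_eq_single (fun _ => true : Str n)]
    · rw [if_pos (fun j _ => rfl)]
      simp [toZ]
    · intro s _ hs
      rw [if_neg]
      intro hcond
      exact hs (funext fun j => hcond j (Set.notMem_empty j))
    · intro h
      exact absurd (Finset.mem_univ _) h
  · rw [if_neg hne]
    unfold mobius
    obtain ⟨j0, hj0⟩ := Set.nonempty_iff_ne_empty.mpr hne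
    set F : Str n → ℤ := fun s =>
      if ∀ j, j ∉ T → s j = true then
        (-1 : ℤ) ^ (∑ j : Fin n, if j ∈ T then (s j).toNat else 0) * toZ true
      else 0 with hF
    have key : ∀ s : Str n, F s + F (Function.update s j0 (!s j0)) = 0 := by
      intro s
      have hcond : (∀ j, j ∉ T → s j = true) ↔
          (∀ j, j ∉ T → Function.update s j0 (!s j0) j = true) := by
        constructor
        · intro h j hj
          rw [Function.update_of_ne (fun e : j = j0 => hj (e ▸ hj0))]
          exact h j hj
        · intro h j hj
          have := h j hj
          rwa [Function.update_of_ne (fun e : j = j0 => hj (e ▸ hj0))] at this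
      by_cases hc : ∀ j, j ∉ T → s j = true
      · rw [hF]
        simp only
        rw [if_pos hc, if_pos (hcond.mp hc)]
        have hsplit : ∀ t : Str n, (∑ j : Fin n, if j ∈ T then (t j).toNat else 0) =
            (t j0).toNat + ∑ j ∈ Finset.univ.erase j0, (if j ∈ T then (t j).toNat else 0) := by
          intro t
          rw [← Finset.add_sum_erase _ _ (Finset.mem_univ j0), if_pos hj0]
        have hrest : (∑ j ∈ Finset.univ.erase j0,
              (if j ∈ T then ((Function.update s j0 (!s j0)) j).toNat else 0)) =
            ∑ j ∈ Finset.univ.erase j0, (if j ∈ T then (s j).toNat else 0) := by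
          apply Finset.sum_congr rfl
          intro j hj
          rw [Function.update_of_ne (Finset.ne_of_mem_erase hj)]
        rw [hsplit, hsplit, hrest]
        cases hs : s j0 <;> simp [pow_add, pow_succ, toZ] <;> ring
      · rw [hF]
        simp only
        rw [if_neg hc, if_neg (fun h => hc (hcond.mpr h))]
        ring
    have := Finset.sum_involution (fun s _ => Function.update s j0 (!s j0))
      (fun s _ => key s)
      (fun s _ _ => fun e => by
        have h2 := congrFun e j0
        simp only [Function.update_self] at h2
        cases hs : s j0 <;> rw [hs] at h2 <;> exact absurd h2 (by simp))
      (fun s _ => Finset.mem_univ _)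
      (fun s _ => by
        funext j
        rcases eq_or_ne j j0 with rfl | hne'
        · simp [Function.update_self]
        · simp [Function.update_of_ne hne'])
    exact this

/-- Möbius of the indicator of `θ`. -/
lemma mobius_theta_term (T : Set (Fin n)) :
    (∑ s : Str n, if ∀ j, j ∉ T → s j = true then
      (-1 : ℤ) ^ (∑ j : Fin n, if j ∈ T then (s j).toNat else 0) *
        (if s = theta n then 1 else 0) else 0) = if T = Set.univ then 1 else 0 := by
  rw [Finset.sum_eq_single (theta n)]
  · rcases eq_or_ne T Set.univ with rfl | hne
    · rw [if_pos (fun j hj => absurd (Set.mem_univ j) hj), if_pos rfl, if_pos rfl]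
      simp [theta]
    · rw [if_neg hne, if_neg]
      intro hcond
      apply hne
      ext j
      simp only [Set.mem_univ, iff_true]
      by_contra hj
      exact Bool.false_ne_true (hcond j hj)
  · intro s _ hs
    rw [if_neg hs, mul_zero, ite_self]
  · intro h
    exact absurd (Finset.mem_univ _) h

lemma mobius_star (f : Str n → Bool) (hf : f (theta n) = true) (T : Set (Fin n)) :
    mobius (star f) T =
      (if T = ∅ then 1 else 0) - mobius f T + (if T = Set.univ then 1 else 0) := by
  have hpt : ∀ s : Str n, toZ (star f s) =
      1 - toZ (f s) + (if s = theta n then 1 else 0) := by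
    intro s
    unfold star
    rcases eq_or_ne s (theta n) with rfl | hs
    · rw [if_pos rfl, if_pos rfl, hf]
      rfl
    · rw [if_neg hs, if_neg hs]
      cases h : f s <;> simp [toZ]
  have hsummand : ∀ s : Str n,
      (if ∀ j, j ∉ T → s j = true then
        (-1 : ℤ) ^ (∑ j : Fin n, if j ∈ T then (s j).toNat else 0) * toZ (star f s) else 0) =
      (if ∀ j, j ∉ T → s j = true then
        (-1 : ℤ) ^ (∑ j : Fin n, if j ∈ T then (s j).toNat else 0) * toZ true else 0)
      - (if ∀ j, j ∉ T → s j = true then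
        (-1 : ℤ) ^ (∑ j : Fin n, if j ∈ T then (s j).toNat else 0) * toZ (f s) else 0)
      + (if ∀ j, j ∉ T → s j = true then
        (-1 : ℤ) ^ (∑ j : Fin n, if j ∈ T then (s j).toNat else 0) *
          (if s = theta n then 1 else 0) else 0) := by
    intro s
    by_cases hc : ∀ j, j ∉ T → s j = true
    · rw [if_pos hc, if_pos hc, if_pos hc, if_pos hc, hpt s]
      have : toZ true = 1 := rfl
      rw [this]
      ring
    · rw [if_neg hc, if_neg hc, if_neg hc, if_neg hc]
      ring
  show (∑ s : Str n, _) = _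
  calc (∑ s : Str n, if ∀ j, j ∉ T → s j = true then
        (-1 : ℤ) ^ (∑ j : Fin n, if j ∈ T then (s j).toNat else 0) * toZ (star f s) else 0)
      = ∑ s : Str n, ((if ∀ j, j ∉ T → s j = true then
          (-1 : ℤ) ^ (∑ j : Fin n, if j ∈ T then (s j).toNat else 0) * toZ true else 0)
        - (if ∀ j, j ∉ T → s j = true then
          (-1 : ℤ) ^ (∑ j : Fin n, if j ∈ T then (s j).toNat else 0) * toZ (f s) else 0)
        + (if ∀ j, j ∉ T → s j = true then
          (-1 : ℤ) ^ (∑ j : Fin n, if j ∈ T then (s j).toNat else 0) *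
            (if s = theta n then 1 else 0) else 0)) := Finset.sum_congr rfl (fun s _ => hsummand s)
    _ = (if T = ∅ then 1 else 0) - mobius f T + (if T = Set.univ then 1 else 0) := by
        rw [Finset.sum_add_distrib, Finset.sum_sub_distrib, mobius_theta_term]
        congr 2
        exact mobius_one T

lemma mobius_perm (f : Str n → Bool) (σ : Equiv.Perm (Fin n)) (T : Set (Fin n)) :
    mobius (permComp f σ) T = mobius f ((σ : Fin n → Fin n) '' T) := by
  unfold mobius
  have E : Str n ≃ Str n := Equiv.arrowCongr σ (Equiv.refl Bool)
  rw [← Equiv.sum_comp (Equiv.arrowCongr σ (Equiv.refl Bool))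
      (fun t => if ∀ j, j ∉ (σ : Fin n → Fin n) '' T → t j = true then
        (-1 : ℤ) ^ (∑ j : Fin n, if j ∈ (σ : Fin n → Fin n) '' T then (t j).toNat else 0) *
          toZ (f t) else 0)]
  apply Finset.sum_congr rfl
  intro s _
  have happ : Equiv.arrowCongr σ (Equiv.refl Bool) s = permAct σ s := by
    funext i
    rfl
  rw [happ]
  have hcond : (∀ j, j ∉ (σ : Fin n → Fin n) '' T → permAct σ s j = true) ↔
      (∀ j, j ∉ T → s j = true) := by
    constructor
    · intro h j hj
      have h2 : (σ : Fin n → Fin n) j ∉ (σ : Fin n → Fin n) '' T := by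
        rw [σ.injective.mem_set_image]
        exact hj
      have := h _ h2
      unfold permAct at this
      rwa [Equiv.Perm.inv_def, Equiv.symm_apply_apply] at this
    · intro h j hj
      unfold permAct
      apply h
      intro hmem
      apply hj
      exact ⟨σ⁻¹ j, hmem, σ.apply_symm_apply j⟩
  have hexp : (∑ j : Fin n, if j ∈ (σ : Fin n → Fin n) '' T then (permAct σ s j).toNat else 0) =
      ∑ j : Fin n, if j ∈ T then (s j).toNat else 0 := by
    rw [← Equiv.sum_comp σ (fun j => if j ∈ (σ : Fin n → Fin n) '' T
        then (permAct σ s j).toNat else 0)]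
    apply Finset.sum_congr rfl
    intro j _
    have h1 : (σ : Fin n → Fin n) j ∈ (σ : Fin n → Fin n) '' T ↔ j ∈ T :=
      σ.injective.mem_set_image
    unfold permAct
    rcases Classical.em (j ∈ T) with hj | hj
    · rw [if_pos (h1.mpr hj), if_pos hj, Equiv.Perm.inv_def, Equiv.symm_apply_apply]
    · rw [if_neg (fun hh => hj (h1.mp hh)), if_neg hj]
  simp only [hcond, hexp]
  rfl

end MobiusLemmas


section TensorMobius

variable {m n : ℕ}

def proj1 (T : Set (Fin (m + n))) : Set (Fin m) := {i | Fin.castAdd n i ∈ T}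

def proj2 (T : Set (Fin (m + n))) : Set (Fin n) := {j | Fin.natAdd m j ∈ T}

def joinT (A : Set (Fin m)) (B : Set (Fin n)) : Set (Fin (m + n)) :=
  (Fin.castAdd n '' A) ∪ (Fin.natAdd m '' B)

lemma castAdd_inj {i i' : Fin m} (h : (Fin.castAdd n i : Fin (m + n)) = Fin.castAdd n i') :
    i = i' := by
  have := congrArg Fin.val h
  simp only [Fin.coe_castAdd] at this
  exact Fin.ext this

lemma natAdd_inj {j j' : Fin n} (h : (Fin.natAdd m j : Fin (m + n)) = Fin.natAdd m j') :
    j = j' := by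
  have := congrArg Fin.val h
  simp only [Fin.coe_natAdd] at this
  exact Fin.ext (by omega)

lemma castAdd_ne_natAdd (i : Fin m) (j : Fin n) :
    (Fin.castAdd n i : Fin (m + n)) ≠ Fin.natAdd m j := by
  intro h
  have := congrArg Fin.val h
  simp only [Fin.coe_castAdd, Fin.coe_natAdd] at this
  have := i.isLt
  omega

lemma proj1_joinT (A : Set (Fin m)) (B : Set (Fin n)) : proj1 (joinT A B) = A := by
  ext i
  constructor
  · rintro (⟨i', hi', he⟩ | ⟨j', hj', he⟩)
    · exact castAdd_inj he ▸ hi'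
    · exact absurd he.symm (castAdd_ne_natAdd i j')
  · intro hi
    exact Or.inl ⟨i, hi, rfl⟩

lemma proj2_joinT (A : Set (Fin m)) (B : Set (Fin n)) : proj2 (joinT A B) = B := by
  ext j
  constructor
  · rintro (⟨i', hi', he⟩ | ⟨j', hj', he⟩)
    · exact absurd he (castAdd_ne_natAdd i' j)
    · exact natAdd_inj he ▸ hj'
  · intro hj
    exact Or.inr ⟨j, hj, rfl⟩

lemma joinT_proj (T : Set (Fin (m + n))) : joinT (proj1 T) (proj2 T) = T := by
  ext k
  constructor
  · rintro (⟨i', hi', rfl⟩ | ⟨j', hj', rfl⟩)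
    · exact hi'
    · exact hj'
  · intro hk
    revert hk
    refine Fin.addCases (fun i => ?_) (fun j => ?_) k
    · intro hi
      exact Or.inl ⟨i, hi, rfl⟩
    · intro hj
      exact Or.inr ⟨j, hj, rfl⟩

lemma proj_subset_of_subset {T T' : Set (Fin (m + n))} (h : T ⊆ T') :
    proj1 T ⊆ proj1 T' ∧ proj2 T ⊆ proj2 T' :=
  ⟨fun _ hi => h hi, fun _ hj => h hj⟩

lemma subset_of_proj_subset {T T' : Set (Fin (m + n))} (h1 : proj1 T ⊆ proj1 T')
    (h2 : proj2 T ⊆ proj2 T') : T ⊆ T' := by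
  intro k
  revert k
  intro k
  refine Fin.addCases (fun i => ?_) (fun j => ?_) k
  · exact fun hi => h1 hi
  · exact fun hj => h2 hj

lemma eq_of_proj_eq {T T' : Set (Fin (m + n))} (h1 : proj1 T = proj1 T')
    (h2 : proj2 T = proj2 T') : T = T' :=
  subset_antisymm (subset_of_proj_subset h1.le h2.le)
    (subset_of_proj_subset h1.ge h2.ge)

lemma joinT_mono {A A' : Set (Fin m)} {B B' : Set (Fin n)} (h1 : A ⊆ A') (h2 : B ⊆ B') :
    joinT A B ⊆ joinT A' B' := by
  apply subset_of_proj_subset <;>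
    simp only [proj1_joinT, proj2_joinT] <;> assumption

lemma joinT_ssubset {A A' : Set (Fin m)} {B B' : Set (Fin n)}
    (h1 : A ⊆ A') (h2 : B ⊆ B') (hne : A ≠ A' ∨ B ≠ B') : joinT A B ⊂ joinT A' B' := by
  refine ssubset_of_subset_of_ne (joinT_mono h1 h2) ?_
  intro he
  have e1 := congrArg proj1 he
  have e2 := congrArg proj2 he
  rw [proj1_joinT, proj1_joinT] at e1
  rw [proj2_joinT, proj2_joinT] at e2
  rcases hne with h | h
  · exact h e1
  · exact h e2

lemma fstStr_append (a : Str m) (b : Str n) : fstStr (Fin.append a b) = a := by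
  funext i
  exact Fin.append_left a b i

lemma sndStr_append (a : Str m) (b : Str n) : sndStr (Fin.append a b) = b := by
  funext j
  exact Fin.append_right a b j

noncomputable def strE : (Str m × Str n) ≃ Str (m + n) where
  toFun p := Fin.append p.1 p.2
  invFun s := (fstStr s, sndStr s)
  left_inv p := Prod.ext (fstStr_append p.1 p.2) (sndStr_append p.1 p.2)
  right_inv s := by
    funext k
    refine Fin.addCases (fun i => ?_) (fun j => ?_) k
    · exact Fin.append_left _ _ i
    · exact Fin.append_right _ _ j

lemma mobius_tensor (f : Str m → Bool) (g : Str n → Bool) (T : Set (Fin (m + n))) :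
    mobius (tensor f g) T = mobius f (proj1 T) * mobius g (proj2 T) := by
  unfold mobius
  rw [← Equiv.sum_comp (strE (m := m) (n := n))
    (fun s => if ∀ j, j ∉ T → s j = true then
      (-1 : ℤ) ^ (∑ j : Fin (m + n), if j ∈ T then (s j).toNat else 0) *
        toZ (tensor f g s) else 0)]
  rw [Fintype.sum_prod_type, Finset.sum_mul_sum]
  apply Finset.sum_congr rfl
  intro a _
  apply Finset.sum_congr rfl
  intro b _
  show (if ∀ k, k ∉ T → Fin.append a b k = true then
      (-1 : ℤ) ^ (∑ k : Fin (m + n), if k ∈ T then (Fin.append a b k).toNat else 0) *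
        toZ (tensor f g (Fin.append a b)) else 0) = _
  have hcond : (∀ k, k ∉ T → Fin.append a b k = true) ↔
      (∀ i, i ∉ proj1 T → a i = true) ∧ (∀ j, j ∉ proj2 T → b j = true) := by
    constructor
    · intro h
      constructor
      · intro i hi
        have := h (Fin.castAdd n i) hi
        rwa [Fin.append_left] at this
      · intro j hj
        have := h (Fin.natAdd m j) hj
        rwa [Fin.append_right] at this
    · rintro ⟨h1, h2⟩ k hk
      revert hk
      refine Fin.addCases (fun i => ?_) (fun j => ?_) k
      · intro hik
        rw [Fin.append_left]
        exact h1 i hik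
      · intro hjk
        rw [Fin.append_right]
        exact h2 j hjk
  have hexp : (∑ k : Fin (m + n), if k ∈ T then (Fin.append a b k).toNat else 0) =
      (∑ i : Fin m, if i ∈ proj1 T then (a i).toNat else 0) +
      (∑ j : Fin n, if j ∈ proj2 T then (b j).toNat else 0) := by
    rw [Fin.sum_univ_add]
    congr 1
    · apply Finset.sum_congr rfl
      intro i _
      rw [Fin.append_left]
      rfl
    · apply Finset.sum_congr rfl
      intro j _
      rw [Fin.append_right]
      rfl
  have hval : toZ (tensor f g (Fin.append a b)) = toZ (f a) * toZ (g b) := by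
    unfold tensor
    rw [fstStr_append, sndStr_append, toZ_and]
  by_cases hA : ∀ i, i ∉ proj1 T → a i = true
  · by_cases hB : ∀ j, j ∉ proj2 T → b j = true
    · rw [if_pos (hcond.mpr ⟨hA, hB⟩), if_pos hA, if_pos hB, hexp, hval, pow_add]
      ring
    · rw [if_neg (fun h => hB (hcond.mp h).2), if_neg hB, mul_zero]
  · rw [if_neg (fun h => hA (hcond.mp h).1), if_neg hA, zero_mul]

lemma structPoset_tensor (f : Str m → Bool) (g : Str n → Bool) (T : Set (Fin (m + n))) :
    T ∈ structPoset (tensor f g) ↔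
      proj1 T ∈ structPoset f ∧ proj2 T ∈ structPoset g := by
  unfold structPoset
  rw [Set.mem_setOf_eq, Set.mem_setOf_eq, Set.mem_setOf_eq, mobius_tensor, mul_ne_zero_iff]

end TensorMobius


section TypeBasics

variable {n : ℕ}

lemma isType_pos {f : Str n → Bool} (hf : IsType n f) : 0 < n := by
  induction hf with
  | one => omega
  | dual _ ih => exact ih
  | perm _ _ ih => exact ih
  | tens _ _ ih1 _ => omega

lemma isType_theta {f : Str n → Bool} (hf : IsType n f) : f (theta n) = true := by
  induction hf with
  | one => rfl
  | dual _ _ =>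
    unfold star
    rw [if_pos rfl]
  | perm σ _ ih =>
    unfold permComp
    have : permAct σ (theta _) = theta _ := rfl
    rw [this, ih]
  | @tens m' n' f' g' _ _ ih1 ih2 =>
    unfold tensor
    have h1 : fstStr (theta (m' + n')) = theta m' := rfl
    have h2 : sndStr (theta (m' + n')) = theta n' := rfl
    rw [h1, h2, ih1, ih2]
    rfl

lemma toZ_cases (b : Bool) : toZ b = 0 ∨ toZ b = 1 := by
  cases b
  · exact Or.inl rfl
  · exact Or.inr rfl

lemma mobius_empty (f : Str n → Bool) : mobius f ∅ = toZ (f (fun _ => true)) := by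
  unfold mobius
  rw [Finset.sum_eq_single (fun _ => true : Str n)]
  · rw [if_pos (fun j _ => rfl)]
    simp
  · intro s _ hs
    rw [if_neg]
    intro hcond
    exact hs (funext fun j => hcond j (Set.notMem_empty j))
  · intro h
    exact absurd (Finset.mem_univ _) h

/-- The invariant carried through the induction on types. -/
def Inv (n : ℕ) (f : Str n → Bool) : Prop :=
  (mobius f Set.univ = 0 ∨ mobius f Set.univ = 1) ∧
  (∀ S ∈ red (structPoset f),
    (IsChain (· ⊆ ·) (dwn (structPoset f) S) ∨ IsChain (· ⊆ ·) (ups (structPoset f) S)) ∧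
    (IsChain (· ⊆ ·) (dwn (structPoset f) S) →
      hgt (structPoset f) S = (dwn (structPoset f) S).ncard - 1)) ∧
  (IsChain (· ⊆ ·) (red (structPoset f)) →
    ∀ T ∈ structPoset f, hgt (structPoset f) T = (dwn (structPoset f) T).ncard - 1)

lemma isChain_congr_endpoints {s t : Set (Set (Fin n))}
    (h : ∀ X : Set (Fin n), X ≠ ∅ → X ≠ Set.univ → (X ∈ s ↔ X ∈ t))
    (hs : IsChain (· ⊆ ·) s) : IsChain (· ⊆ ·) t := by
  intro X hX Y hY hne
  rcases eq_or_ne X ∅ with rfl | hX0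
  · exact Or.inl (Set.empty_subset Y)
  rcases eq_or_ne Y ∅ with rfl | hY0
  · exact Or.inr (Set.empty_subset X)
  rcases eq_or_ne X Set.univ with rfl | hXU
  · exact Or.inr (Set.subset_univ Y)
  rcases eq_or_ne Y Set.univ with rfl | hYU
  · exact Or.inl (Set.subset_univ X)
  exact hs ((h X hX0 hXU).mpr hX) ((h Y hY0 hYU).mpr hY) hne

end TypeBasics

section StarTransfer

variable {n : ℕ} {f : Str n → Bool}

lemma star_mem_mid (hf : f (theta n) = true) {T : Set (Fin n)} (h1 : T ≠ ∅)
    (h2 : T ≠ Set.univ) : T ∈ structPoset (star f) ↔ T ∈ structPoset f := by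
  unfold structPoset
  rw [Set.mem_setOf_eq, Set.mem_setOf_eq, mobius_star f hf, if_neg h1, if_neg h2]
  constructor
  · intro h he
    exact h (by rw [he]; ring)
  · intro h he
    exact h (by linarith)

lemma star_mem_empty (hn : 0 < n) (hf : f (theta n) = true) :
    ((∅ : Set (Fin n)) ∈ structPoset (star f)) ↔ (∅ : Set (Fin n)) ∉ structPoset f := by
  have hne : (∅ : Set (Fin n)) ≠ Set.univ := by
    have : (⟨0, hn⟩ : Fin n) ∈ (Set.univ : Set (Fin n)) := Set.mem_univ _
    intro he
    rw [← he] at this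
    exact this
  unfold structPoset
  rw [Set.mem_setOf_eq, Set.mem_setOf_eq, mobius_star f hf, if_pos rfl, if_neg hne,
    mobius_empty f]
  rcases toZ_cases (f (fun _ => true)) with h | h <;> rw [h] <;> norm_num

lemma star_mem_univ (hn : 0 < n) (hf : f (theta n) = true)
    (hV : mobius f Set.univ = 0 ∨ mobius f Set.univ = 1) :
    ((Set.univ : Set (Fin n)) ∈ structPoset (star f)) ↔
      (Set.univ : Set (Fin n)) ∉ structPoset f := by
  have hne : (Set.univ : Set (Fin n)) ≠ ∅ := by
    intro he
    have : (⟨0, hn⟩ : Fin n) ∈ (Set.univ : Set (Fin n)) := Set.mem_univ _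
    rw [he] at this
    exact this
  unfold structPoset
  rw [Set.mem_setOf_eq, Set.mem_setOf_eq, mobius_star f hf, if_neg hne, if_pos rfl]
  rcases hV with h | h <;> rw [h] <;> norm_num

lemma lab_star (hf : f (theta n) = true) (hn : 0 < n) (T : Set (Fin n)) :
    lab (structPoset (star f)) T = lab (structPoset f) T := by
  unfold lab
  congr 1
  ext x
  constructor
  · rintro ⟨S, ⟨hS, hST⟩, hxS⟩
    rcases eq_or_ne S ∅ with rfl | hS0
    · exact absurd hxS (Set.notMem_empty x)
    have hSU : S ≠ Set.univ := by
      intro he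
      rw [he] at hST
      exact absurd (subset_antisymm (Set.subset_univ T) hST.subset).symm hST.ne
    exact ⟨S, ⟨(star_mem_mid hf hS0 hSU).mp hS, hST⟩, hxS⟩
  · rintro ⟨S, ⟨hS, hST⟩, hxS⟩
    rcases eq_or_ne S ∅ with rfl | hS0
    · exact absurd hxS (Set.notMem_empty x)
    have hSU : S ≠ Set.univ := by
      intro he
      rw [he] at hST
      exact absurd (subset_antisymm (Set.subset_univ T) hST.subset).symm hST.ne
    exact ⟨S, ⟨(star_mem_mid hf hS0 hSU).mpr hS, hST⟩, hxS⟩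

lemma red_star_mid (hf : f (theta n) = true) (hn : 0 < n) {T : Set (Fin n)} (h1 : T ≠ ∅)
    (h2 : T ≠ Set.univ) : T ∈ red (structPoset (star f)) ↔ T ∈ red (structPoset f) := by
  unfold red
  rw [Set.mem_setOf_eq, Set.mem_setOf_eq, star_mem_mid hf h1 h2, lab_star hf hn]

end StarTransfer


section InvStar

variable {n : ℕ} {f : Str n → Bool}

theorem inv_star (hn : 0 < n) (hf : f (theta n) = true) (IH : Inv n f) : Inv n (star f) := by
  obtain ⟨hV, hS17, hC⟩ := IH
  set P := structPoset f with hPdef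
  set P' := structPoset (star f) with hP'def
  have hx0 : (⟨0, hn⟩ : Fin n) ∈ (Set.univ : Set (Fin n)) := Set.mem_univ _
  have hne0U : (∅ : Set (Fin n)) ≠ Set.univ := by
    intro he
    rw [← he] at hx0
    exact hx0
  have hUnonempty : (Set.univ : Set (Fin n)).Nonempty := ⟨⟨0, hn⟩, hx0⟩
  have hmid : ∀ T : Set (Fin n), T ≠ ∅ → T ≠ Set.univ → (T ∈ P' ↔ T ∈ P) :=
    fun T h1 h2 => star_mem_mid hf h1 h2
  have h0 : ((∅ : Set (Fin n)) ∈ P') ↔ ((∅ : Set (Fin n)) ∉ P) := star_mem_empty hn hf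
  have hU : ((Set.univ : Set (Fin n)) ∈ P') ↔ ((Set.univ : Set (Fin n)) ∉ P) :=
    star_mem_univ hn hf hV
  have hredmid : ∀ T : Set (Fin n), T ≠ ∅ → T ≠ Set.univ → (T ∈ red P' ↔ T ∈ red P) :=
    fun T h1 h2 => red_star_mid hf hn h1 h2
  have hdwnmid : ∀ S X : Set (Fin n), X ≠ ∅ → X ≠ Set.univ →
      (X ∈ dwn P' S ↔ X ∈ dwn P S) := by
    intro S X h1 h2
    unfold dwn
    rw [Set.mem_setOf_eq, Set.mem_setOf_eq, hredmid X h1 h2]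
  have hupsmid : ∀ S X : Set (Fin n), X ≠ ∅ → X ≠ Set.univ →
      (X ∈ ups P' S ↔ X ∈ ups P S) := by
    intro S X h1 h2
    unfold ups
    rw [Set.mem_setOf_eq, Set.mem_setOf_eq, hredmid X h1 h2]
  -- the main arithmetic transfer for middle elements
  have harith : ∀ T, T ∈ P → T ≠ ∅ → T ≠ Set.univ → hgt P T = (dwn P T).ncard - 1 →
      hgt P' T = (dwn P' T).ncard - 1 := by
    intro T hTP hT0 hTU hIH
    have hT' : T ∈ P' := (hmid T hT0 hTU).mpr hTP
    have hXU : ∀ X : Set (Fin n), X ⊆ T → X ≠ Set.univ := by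
      intro X hXT he
      exact hTU (subset_antisymm (Set.subset_univ T) (he ▸ hXT))
    by_cases hbot : (∅ : Set (Fin n)) ∈ P
    · have h0' : (∅ : Set (Fin n)) ∉ P' := fun h => (h0.mp h) hbot
      have hdwn' : dwn P' T = dwn P T \ {∅} := by
        ext X
        constructor
        · rintro ⟨hXr, hXT⟩
          have hX0 : X ≠ ∅ := fun he => h0' (he ▸ hXr.1)
          exact ⟨⟨(hredmid X hX0 (hXU X hXT)).mp hXr, hXT⟩, hX0⟩
        · rintro ⟨⟨hXr, hXT⟩, hX0⟩
          have hX0' : X ≠ ∅ := hX0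
          exact ⟨(hredmid X hX0' (hXU X hXT)).mpr hXr, hXT⟩
      have hcong : ∀ X : Set (Fin n), X ⊆ T → (X ∈ P ↔ X ∈ insert ∅ P') := by
        intro X hXT
        rcases eq_or_ne X ∅ with rfl | hX0
        · simp [hbot]
        · rw [Set.mem_insert_iff]
          constructor
          · intro h
            exact Or.inr ((hmid X hX0 (hXU X hXT)).mpr h)
          · rintro (rfl | h)
            · exact absurd rfl hX0
            · exact (hmid X hX0 (hXU X hXT)).mp h
      have he1 : hgt P T = hgt (insert ∅ P') T := hgt_congr hcong
      have he2 : hgt (insert ∅ P') T = hgt P' T + 1 := hgt_insert_empty h0' hT' hT0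
      have hge1 : 1 ≤ hgt P T := by
        have := hgt_lt_of_ssubset hbot hTP
          (Set.empty_ssubset.mpr (Set.nonempty_iff_ne_empty.mpr hT0))
        omega
      have hmem : (∅ : Set (Fin n)) ∈ dwn P T := ⟨empty_mem_red hbot, Set.empty_subset T⟩
      have hcard : (dwn P T \ {∅}).ncard = (dwn P T).ncard - 1 :=
        Set.ncard_diff_singleton_of_mem hmem
      rw [hdwn', hcard]
      omega
    · have h0' : (∅ : Set (Fin n)) ∈ P' := h0.mpr hbot
      have hdwn' : dwn P' T = insert ∅ (dwn P T) := by
        ext X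
        constructor
        · rintro ⟨hXr, hXT⟩
          rcases eq_or_ne X ∅ with rfl | hX0
          · exact Set.mem_insert _ _
          · exact Set.mem_insert_of_mem _ ⟨(hredmid X hX0 (hXU X hXT)).mp hXr, hXT⟩
        · rintro (rfl | ⟨hXr, hXT⟩)
          · exact ⟨empty_mem_red h0', Set.empty_subset T⟩
          · have hX0 : X ≠ ∅ := fun he => hbot (he ▸ hXr.1)
            exact ⟨(hredmid X hX0 (hXU X hXT)).mpr hXr, hXT⟩
      have hcong : ∀ X : Set (Fin n), X ⊆ T → (X ∈ P' ↔ X ∈ insert ∅ P) := by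
        intro X hXT
        rcases eq_or_ne X ∅ with rfl | hX0
        · simp [h0']
        · rw [Set.mem_insert_iff]
          constructor
          · intro h
            exact Or.inr ((hmid X hX0 (hXU X hXT)).mp h)
          · rintro (rfl | h)
            · exact absurd rfl hX0
            · exact (hmid X hX0 (hXU X hXT)).mpr h
      have he1 : hgt P' T = hgt (insert ∅ P) T := hgt_congr hcong
      have he2 : hgt (insert ∅ P) T = hgt P T + 1 := hgt_insert_empty hbot hTP hT0
      have hmem : (∅ : Set (Fin n)) ∉ dwn P T := fun h => hbot h.1.1
      have hcard : (insert ∅ (dwn P T)).ncard = (dwn P T).ncard + 1 :=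
        Set.ncard_insert_of_notMem hmem
      have hpos : 0 < (dwn P T).ncard :=
        (Set.ncard_pos (Set.toFinite _)).mpr (dwn_nonempty hTP)
      rw [hdwn', hcard]
      omega
  -- the top element analysis
  have hdwnU : dwn P' Set.univ = red P' :=
    Set.ext fun X => ⟨fun h => h.1, fun h => ⟨h, Set.subset_univ X⟩⟩
  have huniv_block : (Set.univ : Set (Fin n)) ∈ P' → IsChain (· ⊆ ·) (red P) →
      hgt P' Set.univ = (red P').ncard - 1 := by
    intro hu hch
    have hUP : (Set.univ : Set (Fin n)) ∉ P := hU.mp hu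
    by_cases hP0 : ∀ X ∈ P', X ⊂ Set.univ → X = ∅
    · by_cases hbotp : (∅ : Set (Fin n)) ∈ P'
      · have hstep : hgt P' Set.univ = hgt P' ∅ + 1 := by
          refine hgt_top_step hu hbotp (Set.empty_ssubset.mpr hUnonempty) ?_
          intro X hX hXU
          rw [hP0 X hX hXU]
        have h00 : hgt P' ∅ = 0 :=
          hgt_eq_zero hbotp (fun X _ hX => Set.subset_empty_iff.mp hX)
        have hred' : red P' = {∅, Set.univ} := by
          ext X
          constructor
          · intro hX
            rcases eq_or_ne X Set.univ with rfl | hXU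
            · exact Or.inr rfl
            · exact Or.inl (hP0 X hX.1 (Set.ssubset_univ_iff.mpr hXU))
          · rintro (rfl | rfl)
            · exact empty_mem_red hbotp
            · refine ⟨hu, Or.inr ?_⟩
              intro hlab
              have : (⟨0, hn⟩ : Fin n) ∈ lab P' Set.univ := by
                refine ⟨hx0, ?_⟩
                rintro ⟨Y, ⟨hY, hYU⟩, hxY⟩
                rw [hP0 Y hY hYU] at hxY
                exact hxY
              rw [hlab] at this
              exact this
        rw [hred', Set.ncard_pair hne0U, hstep, h00]
      · have h00 : hgt P' Set.univ = 0 := by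
          refine hgt_eq_zero hu ?_
          intro X hX _
          by_contra hXU
          exact hbotp ((hP0 X hX (Set.ssubset_univ_iff.mpr hXU)) ▸ hX)
        have hred' : red P' = {Set.univ} := by
          ext X
          constructor
          · intro hX
            by_contra hXU
            exact hbotp ((hP0 X hX.1 (Set.ssubset_univ_iff.mpr hXU)) ▸ hX.1)
          · rintro rfl
            refine ⟨hu, Or.inr ?_⟩
            intro hlab
            have : (⟨0, hn⟩ : Fin n) ∈ lab P' Set.univ := by
              refine ⟨hx0, ?_⟩
              rintro ⟨Y, ⟨hY, hYU⟩, hxY⟩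
              exact hbotp ((hP0 Y hY hYU) ▸ hY)
            rw [hlab] at this
            exact this
        rw [hred', Set.ncard_singleton, h00]
    · push_neg at hP0
      obtain ⟨M0, hM0P, hM0U, hM0ne0⟩ := hP0
      have hM0ne : M0 ≠ ∅ := Set.nonempty_iff_ne_empty.mp hM0ne0
      have hM0P' : M0 ∈ P := (hmid M0 hM0ne hM0U.ne).mp hM0P
      obtain ⟨M, hMred, hMub, hMubP⟩ := chain_red_greatest hch ⟨M0, hM0P'⟩
      have hMP : M ∈ P := hMred.1
      have hMU : M ≠ Set.univ := fun he => hUP (he ▸ hMP)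
      have hMne : M ≠ ∅ := by
        intro he
        have := hMubP M0 hM0P'
        rw [he] at this
        exact hM0ne (Set.subset_empty_iff.mp this)
      have hM' : M ∈ P' := (hmid M hMne hMU).mpr hMP
      have hmax' : ∀ X ∈ P', X ⊂ Set.univ → X ⊆ M := by
        intro X hX hXU
        rcases eq_or_ne X ∅ with rfl | hX0
        · exact Set.empty_subset M
        · exact hMubP X ((hmid X hX0 hXU.ne).mp hX)
      have hstep : hgt P' Set.univ = hgt P' M + 1 :=
        hgt_top_step hu hM' (Set.ssubset_univ_iff.mpr hMU) hmax'
      have hMeq : hgt P' M = (dwn P' M).ncard - 1 :=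
        harith M hMP hMne hMU (hC hch M hMP)
      have hMred' : M ∈ red P' := (hredmid M hMne hMU).mpr hMred
      have hUred' : Set.univ ∈ red P' := by
        obtain ⟨x, hxU, hxM⟩ := Set.exists_of_ssubset (Set.ssubset_univ_iff.mpr hMU)
        refine ⟨hu, Or.inr ?_⟩
        intro hlab
        have : x ∈ lab P' Set.univ := by
          refine ⟨hxU, ?_⟩
          rintro ⟨Y, ⟨hY, hYU⟩, hxY⟩
          exact hxM (hmax' Y hY hYU hxY)
        rw [hlab] at this
        exact this
      have hdM : dwn P' M = red P' \ {Set.univ} := by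
        ext X
        constructor
        · rintro ⟨hXr, hXM⟩
          refine ⟨hXr, ?_⟩
          intro he
          rw [Set.mem_singleton_iff] at he
          subst he
          exact hMU (subset_antisymm (Set.subset_univ M) hXM)
        · rintro ⟨hXr, hXU⟩
          rw [Set.mem_singleton_iff] at hXU
          rcases eq_or_ne X ∅ with rfl | hX0
          · exact ⟨hXr, Set.empty_subset M⟩
          · exact ⟨hXr, hMub X ((hredmid X hX0 hXU).mp hXr)⟩
      have hc1 : 1 ≤ (red P' \ {Set.univ}).ncard := by
        refine (Set.ncard_pos (Set.toFinite _)).mpr ⟨M, hMred', ?_⟩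
        rw [Set.mem_singleton_iff]
        exact hMU
      have hc2 : (red P').ncard = (red P' \ {Set.univ}).ncard + 1 := by
        have := Set.ncard_diff_singleton_of_mem hUred'
        have hpos : 0 < (red P').ncard :=
          (Set.ncard_pos (Set.toFinite _)).mpr ⟨Set.univ, hUred'⟩
        omega
      rw [hstep, hMeq, hdM]
      omega
  refine ⟨?_, ?_, ?_⟩
  · rw [mobius_star f hf, if_neg (fun h => hne0U h.symm), if_pos rfl]
    rcases hV with h | h
    · exact Or.inr (by rw [h]; ring)
    · exact Or.inl (by rw [h]; ring)
  · intro S hS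
    rcases eq_or_ne S ∅ with rfl | hS0
    · have hdwn : dwn P' ∅ = {∅} := by
        ext X
        constructor
        · rintro ⟨hXr, hX⟩
          exact Set.subset_empty_iff.mp hX
        · rintro rfl
          exact ⟨hS, le_refl _⟩
      constructor
      · left
        rw [hdwn]
        intro x hx y hy hne
        rw [Set.mem_singleton_iff] at hx hy
        exact absurd (hx.trans hy.symm) hne
      · intro _
        rw [hdwn, Set.ncard_singleton]
        exact hgt_eq_zero hS.1 (fun X _ hX => Set.subset_empty_iff.mp hX)
    rcases eq_or_ne S Set.univ with rfl | hSU
    · constructor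
      · right
        have hup : ups P' Set.univ = {Set.univ} := by
          ext X
          constructor
          · rintro ⟨hXr, hX⟩
            exact (Set.univ_subset_iff.mp hX)
          · rintro rfl
            exact ⟨hS, le_refl _⟩
        rw [hup]
        intro x hx y hy hne
        rw [Set.mem_singleton_iff] at hx hy
        exact absurd (hx.trans hy.symm) hne
      · intro hdc
        rw [hdwnU] at hdc ⊢
        exact huniv_block hS.1 (isChain_congr_endpoints (fun X h1 h2 => hredmid X h1 h2) hdc)
    · have hSP : S ∈ red P := (hredmid S hS0 hSU).mp hS
      obtain ⟨hd_or, hd_imp⟩ := hS17 S hSP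
      constructor
      · rcases hd_or with h | h
        · exact Or.inl (isChain_congr_endpoints
            (fun X h1 h2 => (hdwnmid S X h1 h2).symm) h)
        · exact Or.inr (isChain_congr_endpoints
            (fun X h1 h2 => (hupsmid S X h1 h2).symm) h)
      · intro hdc
        have hdcP : IsChain (· ⊆ ·) (dwn P S) :=
          isChain_congr_endpoints (fun X h1 h2 => hdwnmid S X h1 h2) hdc
        exact harith S hSP.1 hS0 hSU (hd_imp hdcP)
  · intro hch' T hT
    have hchP : IsChain (· ⊆ ·) (red P) :=
      isChain_congr_endpoints (fun X h1 h2 => hredmid X h1 h2) hch'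
    rcases eq_or_ne T ∅ with rfl | hT0
    · have hdwn : dwn P' ∅ = {∅} := by
        ext X
        constructor
        · rintro ⟨hXr, hX⟩
          exact Set.subset_empty_iff.mp hX
        · rintro rfl
          exact ⟨empty_mem_red hT, le_refl _⟩
      rw [hdwn, Set.ncard_singleton]
      exact hgt_eq_zero hT (fun X _ hX => Set.subset_empty_iff.mp hX)
    rcases eq_or_ne T Set.univ with rfl | hTU
    · rw [hdwnU]
      exact huniv_block hT hchP
    · have hTP : T ∈ P := (hmid T hT0 hTU).mp hT
      exact harith T hTP hT0 hTU (hC hchP T hTP)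

end InvStar


section InvPerm

variable {n : ℕ} {f : Str n → Bool}

theorem inv_perm (σ : Equiv.Perm (Fin n)) (IH : Inv n f) : Inv n (permComp f σ) := by
  obtain ⟨hV, hS17, hC⟩ := IH
  set P := structPoset f with hPdef
  set P' := structPoset (permComp f σ) with hP'def
  set φ : Set (Fin n) → Set (Fin n) := fun T => (σ : Fin n → Fin n) '' T with hφ
  set ψ : Set (Fin n) → Set (Fin n) :=
    fun T => ((σ⁻¹ : Equiv.Perm (Fin n)) : Fin n → Fin n) '' T with hψ
  have hφψ : ∀ S, φ (ψ S) = S := by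
    intro S
    show (σ : Fin n → Fin n) '' (((σ⁻¹ : Equiv.Perm (Fin n)) : Fin n → Fin n) '' S) = S
    rw [← Set.image_comp]
    have he : (σ : Fin n → Fin n) ∘ ((σ⁻¹ : Equiv.Perm (Fin n)) : Fin n → Fin n) = id :=
      funext fun x => σ.apply_symm_apply x
    rw [he, Set.image_id]
  have hψφ : ∀ S, ψ (φ S) = S := by
    intro S
    show ((σ⁻¹ : Equiv.Perm (Fin n)) : Fin n → Fin n) '' ((σ : Fin n → Fin n) '' S) = S
    rw [← Set.image_comp]
    have he : ((σ⁻¹ : Equiv.Perm (Fin n)) : Fin n → Fin n) ∘ (σ : Fin n → Fin n) = id :=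
      funext fun x => σ.symm_apply_apply x
    rw [he, Set.image_id]
  have hsub : ∀ X Y : Set (Fin n), X ⊆ Y ↔ φ X ⊆ φ Y := fun X Y =>
    (Set.image_subset_image_iff σ.injective).symm
  have hssub : ∀ X Y : Set (Fin n), X ⊂ Y ↔ φ X ⊂ φ Y := by
    intro X Y
    rw [Set.ssubset_def, Set.ssubset_def, ← hsub X Y, ← hsub Y X]
  have hmem : ∀ T, T ∈ P' ↔ φ T ∈ P := by
    intro T
    show mobius (permComp f σ) T ≠ 0 ↔ mobius f (φ T) ≠ 0
    rw [mobius_perm f σ T]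
  have hmemψ : ∀ T, T ∈ P ↔ ψ T ∈ P' := fun T => by rw [hmem (ψ T), hφψ]
  have hlab : ∀ (T : Set (Fin n)) (x : Fin n),
      x ∈ lab P' T ↔ (σ : Fin n → Fin n) x ∈ lab P (φ T) := by
    intro T x
    unfold lab
    constructor
    · rintro ⟨hxT, hxU⟩
      refine ⟨Set.mem_image_of_mem _ hxT, ?_⟩
      rintro ⟨S', ⟨hS'P, hS'T⟩, hxS'⟩
      refine hxU ⟨ψ S', ⟨(hmem (ψ S')).mpr (by rw [hφψ]; exact hS'P),
        (hssub (ψ S') T).mpr (by rw [hφψ]; exact hS'T)⟩, ?_⟩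
      exact ⟨(σ : Fin n → Fin n) x, hxS', σ.symm_apply_apply x⟩
    · rintro ⟨hxT, hxU⟩
      refine ⟨σ.injective.mem_set_image.mp hxT, ?_⟩
      rintro ⟨S, ⟨hSP', hST⟩, hxS⟩
      exact hxU ⟨φ S, ⟨(hmem S).mp hSP', (hssub S T).mp hST⟩, Set.mem_image_of_mem _ hxS⟩
  have hred : ∀ T, T ∈ red P' ↔ φ T ∈ red P := by
    intro T
    unfold red
    rw [Set.mem_setOf_eq, Set.mem_setOf_eq, hmem T]
    refine and_congr_right fun _ => ?_
    constructor
    · rintro (rfl | hlabne)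
      · left
        exact Set.image_empty _
      · right
        obtain ⟨x, hx⟩ := Set.nonempty_iff_ne_empty.mpr hlabne
        exact Set.nonempty_iff_ne_empty.mp ⟨_, (hlab T x).mp hx⟩
    · rintro (he | hlabne)
      · left
        exact Set.image_eq_empty.mp he
      · right
        obtain ⟨y, hy⟩ := Set.nonempty_iff_ne_empty.mpr hlabne
        have hy' : (σ : Fin n → Fin n) (σ⁻¹ y) ∈ lab P (φ T) := by
          rwa [Equiv.Perm.inv_def, Equiv.apply_symm_apply]
        exact Set.nonempty_iff_ne_empty.mp ⟨σ⁻¹ y, (hlab T (σ⁻¹ y)).mpr hy'⟩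
  have hdwn : ∀ S, dwn P (φ S) = φ '' dwn P' S := by
    intro S
    ext X'
    constructor
    · rintro ⟨hX'r, hX'S⟩
      refine ⟨ψ X', ⟨(hred (ψ X')).mpr (by rw [hφψ]; exact hX'r),
        (hsub (ψ X') S).mpr (by rw [hφψ]; exact hX'S)⟩, hφψ X'⟩
    · rintro ⟨X, ⟨hXr, hXS⟩, rfl⟩
      exact ⟨(hred X).mp hXr, (hsub X S).mp hXS⟩
  have hups : ∀ S, ups P (φ S) = φ '' ups P' S := by
    intro S
    ext X'
    constructor
    · rintro ⟨hX'r, hX'S⟩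
      refine ⟨ψ X', ⟨(hred (ψ X')).mpr (by rw [hφψ]; exact hX'r),
        (hsub S (ψ X')).mpr (by rw [hφψ]; exact hX'S)⟩, hφψ X'⟩
    · rintro ⟨X, ⟨hXr, hXS⟩, rfl⟩
      exact ⟨(hred X).mp hXr, (hsub S X).mp hXS⟩
  have hgt_eq : ∀ S, S ∈ P' → hgt P' S = hgt P (φ S) := by
    intro S hS
    apply le_antisymm
    · exact hgt_le_embed φ (fun X Y _ _ _ _ h => (hssub X Y).mp h)
        (fun X hX _ => (hmem X).mp hX) hS
    · have h2 := hgt_le_embed ψ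
        (fun X Y _ _ _ _ h => by
          rw [← hφψ X, ← hφψ Y] at h
          exact (hssub (ψ X) (ψ Y)).mpr h)
        (fun X hX _ => (hmemψ X).mp hX) ((hmem S).mp hS)
      rwa [hψφ S] at h2
  have hinj : Function.Injective φ := Set.image_injective.mpr σ.injective
  have hredimg : red P = φ '' red P' := by
    ext X'
    constructor
    · intro hX'
      exact ⟨ψ X', (hred (ψ X')).mpr (by rw [hφψ]; exact hX'), hφψ X'⟩
    · rintro ⟨X, hX, rfl⟩
      exact (hred X).mp hX
  refine ⟨?_, ?_, ?_⟩
  · rw [mobius_perm f σ Set.univ]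
    have : (σ : Fin n → Fin n) '' Set.univ = Set.univ := by
      rw [Set.image_univ]
      exact σ.surjective.range_eq
    rw [this]
    exact hV
  · intro S hS
    have hSP := (hred S).mp hS
    obtain ⟨ho, hi⟩ := hS17 (φ S) hSP
    have hdchain : IsChain (· ⊆ ·) (dwn P (φ S)) ↔ IsChain (· ⊆ ·) (dwn P' S) := by
      rw [hdwn S]
      exact isChain_image φ _ (fun X _ Y _ => hsub X Y)
    have huchain : IsChain (· ⊆ ·) (ups P (φ S)) ↔ IsChain (· ⊆ ·) (ups P' S) := by
      rw [hups S]
      exact isChain_image φ _ (fun X _ Y _ => hsub X Y)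
    constructor
    · rcases ho with h | h
      · exact Or.inl (hdchain.mp h)
      · exact Or.inr (huchain.mp h)
    · intro hdc
      have := hi (hdchain.mpr hdc)
      rw [hgt_eq S hS.1, this, hdwn S, Set.ncard_image_of_injective _ hinj]
  · intro hch T hT
    have hchP : IsChain (· ⊆ ·) (red P) := by
      rw [hredimg]
      exact (isChain_image φ _ (fun X _ Y _ => hsub X Y)).mpr hch
    have := hC hchP (φ T) ((hmem T).mp hT)
    rw [hgt_eq T hT, this, hdwn T, Set.ncard_image_of_injective _ hinj]

end InvPerm


section TensorTransfer

variable {m n : ℕ} {f : Str m → Bool} {g : Str n → Bool}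

lemma tensor_red_char (T : Set (Fin (m + n))) (hT : T ∈ structPoset (tensor f g)) :
    T ∈ red (structPoset (tensor f g)) ↔
      ((∀ X ∈ structPoset f, X ⊆ proj1 T → X = proj1 T) ∧
        proj2 T ∈ red (structPoset g)) ∨
      (proj1 T ∈ red (structPoset f) ∧
        (∀ X ∈ structPoset g, X ⊆ proj2 T → X = proj2 T)) := by
  set P1 := structPoset f with hP1def
  set P2 := structPoset g with hP2def
  set P := structPoset (tensor f g) with hPdef
  have hmem : ∀ S : Set (Fin (m + n)), S ∈ P ↔ proj1 S ∈ P1 ∧ proj2 S ∈ P2 :=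
    structPoset_tensor f g
  obtain ⟨hA, hB⟩ := (hmem T).mp hT
  by_cases hAmin : ∀ X ∈ P1, X ⊆ proj1 T → X = proj1 T
  · by_cases hBmin : ∀ X ∈ P2, X ⊆ proj2 T → X = proj2 T
    · have hTred : T ∈ red P := by
        refine minimal_mem_red hT ?_
        intro S hS hST
        obtain ⟨hSA, hSB⟩ := (hmem S).mp hS
        have h1 := proj_subset_of_subset hST
        exact eq_of_proj_eq (hAmin _ hSA h1.1) (hBmin _ hSB h1.2)
      simp only [hTred, true_iff]
      exact Or.inl ⟨hAmin, minimal_mem_red hB hBmin⟩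
    · push_neg at hBmin
      obtain ⟨B0, hB0, hB0sub, hB0ne⟩ := hBmin
      have hBne : proj2 T ≠ ∅ := by
        intro he
        rw [he] at hB0sub hB0ne
        exact hB0ne (Set.subset_empty_iff.mp hB0sub)
      have hTne : T ≠ ∅ := by
        obtain ⟨j, hj⟩ := Set.nonempty_iff_ne_empty.mpr hBne
        intro he
        have h2 : Fin.natAdd m j ∈ T := hj
        rw [he] at h2
        exact h2
      have hS0 : joinT (proj1 T) B0 ∈ P := by
        rw [hmem, proj1_joinT, proj2_joinT]
        exact ⟨hA, hB0⟩
      have hS0T : joinT (proj1 T) B0 ⊂ T := by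
        have h2 := joinT_ssubset (le_refl (proj1 T)) hB0sub (Or.inr hB0ne)
        rwa [joinT_proj] at h2
      have hlabn : ∀ j : Fin n, Fin.natAdd m j ∈ lab P T ↔ j ∈ lab P2 (proj2 T) := by
        intro j
        constructor
        · rintro ⟨hjT, hjU⟩
          refine ⟨hjT, ?_⟩
          rintro ⟨S', ⟨hS', hS'B⟩, hjS'⟩
          refine hjU ⟨joinT (proj1 T) S', ⟨?_, ?_⟩, Or.inr ⟨j, hjS', rfl⟩⟩
          · rw [hmem, proj1_joinT, proj2_joinT]
            exact ⟨hA, hS'⟩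
          · have h2 := joinT_ssubset (le_refl (proj1 T)) hS'B.subset (Or.inr hS'B.ne)
            rwa [joinT_proj] at h2
        · rintro ⟨hjB, hjU⟩
          refine ⟨hjB, ?_⟩
          rintro ⟨S, ⟨hS, hST⟩, hjS⟩
          obtain ⟨hSA, hSB⟩ := (hmem S).mp hS
          have hsub := proj_subset_of_subset hST.subset
          have hSA' : proj1 S = proj1 T := hAmin _ hSA hsub.1
          have hSBne : proj2 S ≠ proj2 T := by
            intro he
            exact hST.ne (eq_of_proj_eq hSA' he)
          exact hjU ⟨proj2 S, ⟨hSB, ssubset_of_subset_of_ne hsub.2 hSBne⟩, hjS⟩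
      have hlabc : ∀ i : Fin m, Fin.castAdd n i ∉ lab P T := by
        rintro i ⟨hiT, hiU⟩
        exact hiU ⟨joinT (proj1 T) B0, ⟨hS0, hS0T⟩, Or.inl ⟨i, hiT, rfl⟩⟩
      have hiff : (lab P T ≠ ∅) ↔ (lab P2 (proj2 T) ≠ ∅) := by
        constructor
        · intro h
          obtain ⟨k, hk⟩ := Set.nonempty_iff_ne_empty.mpr h
          revert hk
          refine Fin.addCases (fun i => ?_) (fun j => ?_) k
          · intro hk
            exact absurd hk (hlabc i)
          · intro hk
            exact Set.nonempty_iff_ne_empty.mp ⟨j, (hlabn j).mp hk⟩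
        · intro h
          obtain ⟨j, hj⟩ := Set.nonempty_iff_ne_empty.mpr h
          exact Set.nonempty_iff_ne_empty.mp ⟨_, (hlabn j).mpr hj⟩
      constructor
      · rintro ⟨-, (he | hlabne)⟩
        · exact absurd he hTne
        · exact Or.inl ⟨hAmin, hB, Or.inr (hiff.mp hlabne)⟩
      · rintro (⟨-, -, (he | hlabne)⟩ | ⟨-, hBmin'⟩)
        · exact absurd he hBne
        · exact ⟨hT, Or.inr (hiff.mpr hlabne)⟩
        · exact absurd (hBmin' B0 hB0 hB0sub) hB0ne
  · push_neg at hAmin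
    obtain ⟨A0, hA0, hA0sub, hA0ne⟩ := hAmin
    have hAne : proj1 T ≠ ∅ := by
      intro he
      rw [he] at hA0sub hA0ne
      exact hA0ne (Set.subset_empty_iff.mp hA0sub)
    have hTne : T ≠ ∅ := by
      obtain ⟨i, hi⟩ := Set.nonempty_iff_ne_empty.mpr hAne
      intro he
      have h2 : Fin.castAdd n i ∈ T := hi
      rw [he] at h2
      exact h2
    have hS0 : joinT A0 (proj2 T) ∈ P := by
      rw [hmem, proj1_joinT, proj2_joinT]
      exact ⟨hA0, hB⟩
    have hS0T : joinT A0 (proj2 T) ⊂ T := by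
      have h2 := joinT_ssubset hA0sub (le_refl (proj2 T)) (Or.inl hA0ne)
      rwa [joinT_proj] at h2
    by_cases hBmin : ∀ X ∈ P2, X ⊆ proj2 T → X = proj2 T
    · have hlabn : ∀ i : Fin m, Fin.castAdd n i ∈ lab P T ↔ i ∈ lab P1 (proj1 T) := by
        intro i
        constructor
        · rintro ⟨hiT, hiU⟩
          refine ⟨hiT, ?_⟩
          rintro ⟨S', ⟨hS', hS'A⟩, hiS'⟩
          refine hiU ⟨joinT S' (proj2 T), ⟨?_, ?_⟩, Or.inl ⟨i, hiS', rfl⟩⟩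
          · rw [hmem, proj1_joinT, proj2_joinT]
            exact ⟨hS', hB⟩
          · have h2 := joinT_ssubset hS'A.subset (le_refl (proj2 T)) (Or.inl hS'A.ne)
            rwa [joinT_proj] at h2
        · rintro ⟨hiA, hiU⟩
          refine ⟨hiA, ?_⟩
          rintro ⟨S, ⟨hS, hST⟩, hiS⟩
          obtain ⟨hSA, hSB⟩ := (hmem S).mp hS
          have hsub := proj_subset_of_subset hST.subset
          have hSB' : proj2 S = proj2 T := hBmin _ hSB hsub.2
          have hSAne : proj1 S ≠ proj1 T := by
            intro he
            exact hST.ne (eq_of_proj_eq he hSB')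
          exact hiU ⟨proj1 S, ⟨hSA, ssubset_of_subset_of_ne hsub.1 hSAne⟩, hiS⟩
      have hlabc : ∀ j : Fin n, Fin.natAdd m j ∉ lab P T := by
        rintro j ⟨hjT, hjU⟩
        exact hjU ⟨joinT A0 (proj2 T), ⟨hS0, hS0T⟩, Or.inr ⟨j, hjT, rfl⟩⟩
      have hiff : (lab P T ≠ ∅) ↔ (lab P1 (proj1 T) ≠ ∅) := by
        constructor
        · intro h
          obtain ⟨k, hk⟩ := Set.nonempty_iff_ne_empty.mpr h
          revert hk
          refine Fin.addCases (fun i => ?_) (fun j => ?_) k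
          · intro hk
            exact Set.nonempty_iff_ne_empty.mp ⟨i, (hlabn i).mp hk⟩
          · intro hk
            exact absurd hk (hlabc j)
        · intro h
          obtain ⟨i, hi⟩ := Set.nonempty_iff_ne_empty.mpr h
          exact Set.nonempty_iff_ne_empty.mp ⟨_, (hlabn i).mpr hi⟩
      constructor
      · rintro ⟨-, (he | hlabne)⟩
        · exact absurd he hTne
        · exact Or.inr ⟨⟨hA, Or.inr (hiff.mp hlabne)⟩, hBmin⟩
      · rintro (⟨hAmin', -⟩ | ⟨⟨-, (he | hlabne)⟩, -⟩)
        · exact absurd (hAmin' A0 hA0 hA0sub) hA0ne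
        · exact absurd he hAne
        · exact ⟨hT, Or.inr (hiff.mpr hlabne)⟩
    · push_neg at hBmin
      obtain ⟨B0, hB0, hB0sub, hB0ne⟩ := hBmin
      have hS0' : joinT (proj1 T) B0 ∈ P := by
        rw [hmem, proj1_joinT, proj2_joinT]
        exact ⟨hA, hB0⟩
      have hS0T' : joinT (proj1 T) B0 ⊂ T := by
        have h2 := joinT_ssubset (le_refl (proj1 T)) hB0sub (Or.inr hB0ne)
        rwa [joinT_proj] at h2
      have hlab_empty : lab P T = ∅ := by
        ext k
        simp only [Set.mem_empty_iff_false, iff_false]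
        revert k
        intro k
        refine Fin.addCases (fun i => ?_) (fun j => ?_) k
        · rintro ⟨hiT, hiU⟩
          exact hiU ⟨joinT (proj1 T) B0, ⟨hS0', hS0T'⟩, Or.inl ⟨i, hiT, rfl⟩⟩
        · rintro ⟨hjT, hjU⟩
          exact hjU ⟨joinT A0 (proj2 T), ⟨hS0, hS0T⟩, Or.inr ⟨j, hjT, rfl⟩⟩
      constructor
      · rintro ⟨-, (he | hlabne)⟩
        · exact absurd he hTne
        · exact absurd hlab_empty hlabne
      · rintro (⟨hAmin', -⟩ | ⟨-, hBmin'⟩)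
        · exact absurd (hAmin' A0 hA0 hA0sub) hA0ne
        · exact absurd (hBmin' B0 hB0 hB0sub) hB0ne

end TensorTransfer


section TensorTransfer2

variable {m n : ℕ} {f : Str m → Bool} {g : Str n → Bool}

lemma tensor_dwn_left {A : Set (Fin m)} {B : Set (Fin n)}
    (hA : A ∈ structPoset f) (hAmin : ∀ X ∈ structPoset f, X ⊆ A → X = A)
    (hB : B ∈ structPoset g) :
    dwn (structPoset (tensor f g)) (joinT A B) =
      (joinT A : Set (Fin n) → Set (Fin (m + n))) '' dwn (structPoset g) B := by
  have hmem : ∀ S : Set (Fin (m + n)), S ∈ structPoset (tensor f g) ↔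
      proj1 S ∈ structPoset f ∧ proj2 S ∈ structPoset g := structPoset_tensor f g
  ext X
  constructor
  · rintro ⟨hXred, hXsub⟩
    have hXP := hXred.1
    obtain ⟨hXA, hXB⟩ := (hmem X).mp hXP
    have hsub := proj_subset_of_subset hXsub
    rw [proj1_joinT] at hsub
    rw [proj2_joinT] at hsub
    have hXAeq : proj1 X = A := hAmin _ hXA hsub.1
    have hXBred : proj2 X ∈ red (structPoset g) := by
      rcases (tensor_red_char X hXP).mp hXred with ⟨-, h⟩ | ⟨-, h⟩
      · exact h
      · exact minimal_mem_red hXB h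
    refine ⟨proj2 X, ⟨hXBred, hsub.2⟩, ?_⟩
    rw [← hXAeq]
    exact joinT_proj X
  · rintro ⟨B', ⟨hB'red, hB'sub⟩, rfl⟩
    have hmemJ : joinT A B' ∈ structPoset (tensor f g) := by
      rw [hmem, proj1_joinT, proj2_joinT]
      exact ⟨hA, hB'red.1⟩
    refine ⟨?_, joinT_mono (le_refl A) hB'sub⟩
    refine (tensor_red_char _ hmemJ).mpr (Or.inl ⟨?_, ?_⟩)
    · rw [proj1_joinT]
      exact hAmin
    · rw [proj2_joinT]
      exact hB'red

lemma tensor_dwn_right {A : Set (Fin m)} {B : Set (Fin n)}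
    (hA : A ∈ structPoset f) (hBmin : ∀ X ∈ structPoset g, X ⊆ B → X = B)
    (hB : B ∈ structPoset g) :
    dwn (structPoset (tensor f g)) (joinT A B) =
      (fun A' => joinT A' B) '' dwn (structPoset f) A := by
  have hmem : ∀ S : Set (Fin (m + n)), S ∈ structPoset (tensor f g) ↔
      proj1 S ∈ structPoset f ∧ proj2 S ∈ structPoset g := structPoset_tensor f g
  ext X
  constructor
  · rintro ⟨hXred, hXsub⟩
    have hXP := hXred.1
    obtain ⟨hXA, hXB⟩ := (hmem X).mp hXP
    have hsub := proj_subset_of_subset hXsub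
    rw [proj1_joinT] at hsub
    rw [proj2_joinT] at hsub
    have hXBeq : proj2 X = B := hBmin _ hXB hsub.2
    have hXAred : proj1 X ∈ red (structPoset f) := by
      rcases (tensor_red_char X hXP).mp hXred with ⟨h, -⟩ | ⟨h, -⟩
      · exact minimal_mem_red hXA h
      · exact h
    refine ⟨proj1 X, ⟨hXAred, hsub.1⟩, ?_⟩
    show joinT (proj1 X) B = X
    rw [← hXBeq]
    exact joinT_proj X
  · rintro ⟨A', ⟨hA'red, hA'sub⟩, rfl⟩
    have hmemJ : joinT A' B ∈ structPoset (tensor f g) := by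
      rw [hmem, proj1_joinT, proj2_joinT]
      exact ⟨hA'red.1, hB⟩
    refine ⟨?_, joinT_mono hA'sub (le_refl B)⟩
    refine (tensor_red_char _ hmemJ).mpr (Or.inr ⟨?_, ?_⟩)
    · rw [proj1_joinT]
      exact hA'red
    · rw [proj2_joinT]
      exact hBmin

lemma tensor_ups_left {A : Set (Fin m)} {B : Set (Fin n)}
    (hA : A ∈ structPoset f) (hAmin : ∀ X ∈ structPoset f, X ⊆ A → X = A)
    (hB : B ∈ structPoset g) (hBnotmin : ¬ ∀ X ∈ structPoset g, X ⊆ B → X = B) :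
    ups (structPoset (tensor f g)) (joinT A B) =
      (joinT A : Set (Fin n) → Set (Fin (m + n))) '' ups (structPoset g) B := by
  have hmem : ∀ S : Set (Fin (m + n)), S ∈ structPoset (tensor f g) ↔
      proj1 S ∈ structPoset f ∧ proj2 S ∈ structPoset g := structPoset_tensor f g
  ext X
  constructor
  · rintro ⟨hXred, hXsub⟩
    have hXP := hXred.1
    obtain ⟨hXA, hXB⟩ := (hmem X).mp hXP
    have hsub := proj_subset_of_subset hXsub
    rw [proj1_joinT] at hsub
    rw [proj2_joinT] at hsub
    rcases (tensor_red_char X hXP).mp hXred with ⟨hmin, hred⟩ | ⟨-, hmin⟩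
    · have hXAeq : proj1 X = A := (hmin A hA hsub.1).symm
      refine ⟨proj2 X, ⟨hred, hsub.2⟩, ?_⟩
      rw [← hXAeq]
      exact joinT_proj X
    · exfalso
      have hBeq : B = proj2 X := hmin B hB hsub.2
      apply hBnotmin
      rw [hBeq]
      exact hmin
  · rintro ⟨B', ⟨hB'red, hB'sub⟩, rfl⟩
    have hmemJ : joinT A B' ∈ structPoset (tensor f g) := by
      rw [hmem, proj1_joinT, proj2_joinT]
      exact ⟨hA, hB'red.1⟩
    refine ⟨?_, joinT_mono (le_refl A) hB'sub⟩
    refine (tensor_red_char _ hmemJ).mpr (Or.inl ⟨?_, ?_⟩)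
    · rw [proj1_joinT]
      exact hAmin
    · rw [proj2_joinT]
      exact hB'red

lemma tensor_ups_right {A : Set (Fin m)} {B : Set (Fin n)}
    (hA : A ∈ structPoset f) (hBmin : ∀ X ∈ structPoset g, X ⊆ B → X = B)
    (hB : B ∈ structPoset g) (hAnotmin : ¬ ∀ X ∈ structPoset f, X ⊆ A → X = A) :
    ups (structPoset (tensor f g)) (joinT A B) =
      (fun A' => joinT A' B) '' ups (structPoset f) A := by
  have hmem : ∀ S : Set (Fin (m + n)), S ∈ structPoset (tensor f g) ↔
      proj1 S ∈ structPoset f ∧ proj2 S ∈ structPoset g := structPoset_tensor f g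
  ext X
  constructor
  · rintro ⟨hXred, hXsub⟩
    have hXP := hXred.1
    obtain ⟨hXA, hXB⟩ := (hmem X).mp hXP
    have hsub := proj_subset_of_subset hXsub
    rw [proj1_joinT] at hsub
    rw [proj2_joinT] at hsub
    rcases (tensor_red_char X hXP).mp hXred with ⟨hmin, -⟩ | ⟨hred, hmin⟩
    · exfalso
      have hAeq : A = proj1 X := hmin A hA hsub.1
      apply hAnotmin
      rw [hAeq]
      exact hmin
    · have hXBeq : proj2 X = B := (hmin B hB hsub.2).symm
      refine ⟨proj1 X, ⟨hred, hsub.1⟩, ?_⟩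
      show joinT (proj1 X) B = X
      rw [← hXBeq]
      exact joinT_proj X
  · rintro ⟨A', ⟨hA'red, hA'sub⟩, rfl⟩
    have hmemJ : joinT A' B ∈ structPoset (tensor f g) := by
      rw [hmem, proj1_joinT, proj2_joinT]
      exact ⟨hA'red.1, hB⟩
    refine ⟨?_, joinT_mono hA'sub (le_refl B)⟩
    refine (tensor_red_char _ hmemJ).mpr (Or.inr ⟨?_, ?_⟩)
    · rw [proj1_joinT]
      exact hA'red
    · rw [proj2_joinT]
      exact hBmin

lemma tensor_hgt_left {A : Set (Fin m)} {B : Set (Fin n)}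
    (hA : A ∈ structPoset f) (hAmin : ∀ X ∈ structPoset f, X ⊆ A → X = A)
    (hB : B ∈ structPoset g) :
    hgt (structPoset (tensor f g)) (joinT A B) = hgt (structPoset g) B := by
  have hmem : ∀ S : Set (Fin (m + n)), S ∈ structPoset (tensor f g) ↔
      proj1 S ∈ structPoset f ∧ proj2 S ∈ structPoset g := structPoset_tensor f g
  have hmemJ : joinT A B ∈ structPoset (tensor f g) := by
    rw [hmem, proj1_joinT, proj2_joinT]
    exact ⟨hA, hB⟩
  apply le_antisymm
  · have h2 := hgt_le_embed (P := structPoset (tensor f g)) (Q := structPoset g)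
      (S := joinT A B) proj2
      (fun X Y hX hY hXs hYs hXY => by
        obtain ⟨hXA, hXB⟩ := (hmem X).mp hX
        obtain ⟨hYA, hYB⟩ := (hmem Y).mp hY
        have hsX := proj_subset_of_subset hXs
        have hsY := proj_subset_of_subset hYs
        rw [proj1_joinT] at hsX hsY
        have heX : proj1 X = A := hAmin _ hXA hsX.1
        have heY : proj1 Y = A := hAmin _ hYA hsY.1
        refine ssubset_of_subset_of_ne (proj_subset_of_subset hXY.subset).2 ?_
        intro he
        exact hXY.ne (eq_of_proj_eq (heX.trans heY.symm) he))
      (fun X hX _ => ((hmem X).mp hX).2) hmemJ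
    rwa [proj2_joinT] at h2
  · exact hgt_le_embed (P := structPoset g) (Q := structPoset (tensor f g))
      (joinT A : Set (Fin n) → Set (Fin (m + n)))
      (fun X Y _ _ _ _ hXY => joinT_ssubset (le_refl A) hXY.subset (Or.inr hXY.ne))
      (fun X hX _ => by
        rw [hmem, proj1_joinT, proj2_joinT]
        exact ⟨hA, hX⟩) hB

lemma tensor_hgt_right {A : Set (Fin m)} {B : Set (Fin n)}
    (hA : A ∈ structPoset f) (hBmin : ∀ X ∈ structPoset g, X ⊆ B → X = B)
    (hB : B ∈ structPoset g) :
    hgt (structPoset (tensor f g)) (joinT A B) = hgt (structPoset f) A := by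
  have hmem : ∀ S : Set (Fin (m + n)), S ∈ structPoset (tensor f g) ↔
      proj1 S ∈ structPoset f ∧ proj2 S ∈ structPoset g := structPoset_tensor f g
  have hmemJ : joinT A B ∈ structPoset (tensor f g) := by
    rw [hmem, proj1_joinT, proj2_joinT]
    exact ⟨hA, hB⟩
  apply le_antisymm
  · have h2 := hgt_le_embed (P := structPoset (tensor f g)) (Q := structPoset f)
      (S := joinT A B) proj1
      (fun X Y hX hY hXs hYs hXY => by
        obtain ⟨hXA, hXB⟩ := (hmem X).mp hX
        obtain ⟨hYA, hYB⟩ := (hmem Y).mp hY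
        have hsX := proj_subset_of_subset hXs
        have hsY := proj_subset_of_subset hYs
        rw [proj2_joinT] at hsX hsY
        have heX : proj2 X = B := hBmin _ hXB hsX.2
        have heY : proj2 Y = B := hBmin _ hYB hsY.2
        refine ssubset_of_subset_of_ne (proj_subset_of_subset hXY.subset).1 ?_
        intro he
        exact hXY.ne (eq_of_proj_eq he (heX.trans heY.symm)))
      (fun X hX _ => ((hmem X).mp hX).1) hmemJ
    rwa [proj1_joinT] at h2
  · exact hgt_le_embed (P := structPoset f) (Q := structPoset (tensor f g))
      (fun A' => joinT A' B)
      (fun X Y _ _ _ _ hXY => joinT_ssubset hXY.subset (le_refl B) (Or.inl hXY.ne))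
      (fun X hX _ => by
        rw [hmem, proj1_joinT, proj2_joinT]
        exact ⟨hX, hB⟩) hA

end TensorTransfer2


section InvTensor

variable {m n : ℕ} {f : Str m → Bool} {g : Str n → Bool}

theorem inv_tensor (IHf : Inv m f) (IHg : Inv n g) : Inv (m + n) (tensor f g) := by
  set P1 := structPoset f with hP1def
  set P2 := structPoset g with hP2def
  set P := structPoset (tensor f g) with hPdef
  have hmem : ∀ S : Set (Fin (m + n)), S ∈ P ↔ proj1 S ∈ P1 ∧ proj2 S ∈ P2 :=
    structPoset_tensor f g
  have hsubL : ∀ (A : Set (Fin m)) (X Y : Set (Fin n)), X ⊆ Y ↔ joinT A X ⊆ joinT A Y := by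
    intro A X Y
    constructor
    · exact fun h => joinT_mono (le_refl A) h
    · intro h
      have h2 := (proj_subset_of_subset h).2
      rwa [proj2_joinT, proj2_joinT] at h2
  have hsubR : ∀ (B : Set (Fin n)) (X Y : Set (Fin m)), X ⊆ Y ↔ joinT X B ⊆ joinT Y B := by
    intro B X Y
    constructor
    · exact fun h => joinT_mono h (le_refl B)
    · intro h
      have h2 := (proj_subset_of_subset h).1
      rwa [proj1_joinT, proj1_joinT] at h2
  have hinjL : ∀ A : Set (Fin m), Function.Injective (joinT A : Set (Fin n) → _) := by
    intro A X Y h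
    have h2 := congrArg proj2 h
    rwa [proj2_joinT, proj2_joinT] at h2
  have hinjR : ∀ B : Set (Fin n),
      Function.Injective (fun A' : Set (Fin m) => joinT A' B) := by
    intro B X Y h
    have h2 := congrArg proj1 h
    simp only at h2
    rwa [proj1_joinT, proj1_joinT] at h2
  refine ⟨?_, ?_, ?_⟩
  · rw [mobius_tensor f g]
    have h1 : proj1 (Set.univ : Set (Fin (m + n))) = Set.univ :=
      Set.eq_univ_iff_forall.mpr fun i => Set.mem_univ (Fin.castAdd n i)
    have h2 : proj2 (Set.univ : Set (Fin (m + n))) = Set.univ :=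
      Set.eq_univ_iff_forall.mpr fun j => Set.mem_univ (Fin.natAdd m j)
    rw [h1, h2]
    rcases IHf.1 with ha | ha <;> rcases IHg.1 with hb | hb <;> rw [ha, hb] <;> norm_num
  · intro S hS
    have hSP := hS.1
    obtain ⟨hA, hB⟩ := (hmem S).mp hSP
    have hSJ : joinT (proj1 S) (proj2 S) = S := joinT_proj S
    rcases (tensor_red_char S hSP).mp hS with ⟨hAmin, hBred⟩ | ⟨hAred, hBmin⟩
    · -- first component minimal
      rw [← hSJ]
      have hdwn := tensor_dwn_left (g := g) hA hAmin hB
      constructor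
      · by_cases hBmin2 : ∀ X ∈ P2, X ⊆ proj2 S → X = proj2 S
        · left
          rw [hdwn]
          refine (isChain_image _ _ (fun X _ Y _ => hsubL (proj1 S) X Y)).mpr ?_
          intro X hX Y hY hne
          exact absurd ((hBmin2 X hX.1.1 hX.2).trans (hBmin2 Y hY.1.1 hY.2).symm) hne
        · rcases (IHg.2.1 (proj2 S) hBred).1 with hd | hu
          · left
            rw [hdwn]
            exact (isChain_image _ _ (fun X _ Y _ => hsubL (proj1 S) X Y)).mpr hd
          · right
            rw [tensor_ups_left hA hAmin hB hBmin2]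
            exact (isChain_image _ _ (fun X _ Y _ => hsubL (proj1 S) X Y)).mpr hu
      · intro hdc
        rw [hdwn] at hdc
        have hd2 : IsChain (· ⊆ ·) (dwn P2 (proj2 S)) :=
          (isChain_image _ _ (fun X _ Y _ => hsubL (proj1 S) X Y)).mp hdc
        rw [tensor_hgt_left hA hAmin hB, hdwn,
          Set.ncard_image_of_injective _ (hinjL (proj1 S))]
        exact (IHg.2.1 (proj2 S) hBred).2 hd2
    · -- second component minimal
      rw [← hSJ]
      have hdwn := tensor_dwn_right (f := f) hA hBmin hB
      constructor
      · by_cases hAmin2 : ∀ X ∈ P1, X ⊆ proj1 S → X = proj1 S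
        · left
          rw [hdwn]
          refine (isChain_image _ _ (fun X _ Y _ => hsubR (proj2 S) X Y)).mpr ?_
          intro X hX Y hY hne
          exact absurd ((hAmin2 X hX.1.1 hX.2).trans (hAmin2 Y hY.1.1 hY.2).symm) hne
        · rcases (IHf.2.1 (proj1 S) hAred).1 with hd | hu
          · left
            rw [hdwn]
            exact (isChain_image _ _ (fun X _ Y _ => hsubR (proj2 S) X Y)).mpr hd
          · right
            rw [tensor_ups_right hA hBmin hB hAmin2]
            exact (isChain_image _ _ (fun X _ Y _ => hsubR (proj2 S) X Y)).mpr hu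
      · intro hdc
        rw [hdwn] at hdc
        have hd2 : IsChain (· ⊆ ·) (dwn P1 (proj1 S)) :=
          (isChain_image _ _ (fun X _ Y _ => hsubR (proj2 S) X Y)).mp hdc
        rw [tensor_hgt_right hA hBmin hB, hdwn,
          Set.ncard_image_of_injective _ (hinjR (proj2 S))]
        exact (IHf.2.1 (proj1 S) hAred).2 hd2
  · intro hch T hT
    obtain ⟨hTA, hTB⟩ := (hmem T).mp hT
    obtain ⟨m1, hm1red, -, hm1min⟩ := exists_min_below hTA
    obtain ⟨m2, hm2red, -, hm2min⟩ := exists_min_below hTB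
    have hm1P : m1 ∈ P1 := hm1red.1
    have hm2P : m2 ∈ P2 := hm2red.1
    have huniq1 : ∀ A, A ∈ P1 → (∀ X ∈ P1, X ⊆ A → X = A) → A = m1 := by
      intro A hA hAmin
      have hX1 : joinT A m2 ∈ red P := by
        refine (tensor_red_char _ ?_).mpr (Or.inl ⟨?_, ?_⟩)
        · rw [hmem, proj1_joinT, proj2_joinT]
          exact ⟨hA, hm2P⟩
        · rw [proj1_joinT]
          exact hAmin
        · rw [proj2_joinT]
          exact hm2red
      have hX2 : joinT m1 m2 ∈ red P := by
        refine (tensor_red_char _ ?_).mpr (Or.inl ⟨?_, ?_⟩)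
        · rw [hmem, proj1_joinT, proj2_joinT]
          exact ⟨hm1P, hm2P⟩
        · rw [proj1_joinT]
          exact hm1min
        · rw [proj2_joinT]
          exact hm2red
      rcases eq_or_ne (joinT A m2) (joinT m1 m2) with he | hne
      · have := congrArg proj1 he
        rwa [proj1_joinT, proj1_joinT] at this
      · rcases hch hX1 hX2 hne with hle | hle
        · have h2 := (proj_subset_of_subset hle).1
          rw [proj1_joinT, proj1_joinT] at h2
          exact (hm1min A hA h2)
        · have h2 := (proj_subset_of_subset hle).1
          rw [proj1_joinT, proj1_joinT] at h2
          exact (hAmin m1 hm1P h2).symm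
    have huniq2 : ∀ B, B ∈ P2 → (∀ X ∈ P2, X ⊆ B → X = B) → B = m2 := by
      intro B hB hBmin
      have hX1 : joinT m1 B ∈ red P := by
        refine (tensor_red_char _ ?_).mpr (Or.inl ⟨?_, ?_⟩)
        · rw [hmem, proj1_joinT, proj2_joinT]
          exact ⟨hm1P, hB⟩
        · rw [proj1_joinT]
          exact hm1min
        · rw [proj2_joinT]
          exact minimal_mem_red hB hBmin
      have hX2 : joinT m1 m2 ∈ red P := by
        refine (tensor_red_char _ ?_).mpr (Or.inl ⟨?_, ?_⟩)
        · rw [hmem, proj1_joinT, proj2_joinT]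
          exact ⟨hm1P, hm2P⟩
        · rw [proj1_joinT]
          exact hm1min
        · rw [proj2_joinT]
          exact hm2red
      rcases eq_or_ne (joinT m1 B) (joinT m1 m2) with he | hne
      · have := congrArg proj2 he
        rwa [proj2_joinT, proj2_joinT] at this
      · rcases hch hX1 hX2 hne with hle | hle
        · have h2 := (proj_subset_of_subset hle).2
          rw [proj2_joinT, proj2_joinT] at h2
          exact (hm2min B hB h2)
        · have h2 := (proj_subset_of_subset hle).2
          rw [proj2_joinT, proj2_joinT] at h2
          exact (hBmin m2 hm2P h2).symm
    have hmin1glob : ∀ A ∈ P1, m1 ⊆ A := by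
      intro A hA
      obtain ⟨M, hMred, hMsub, hMmin⟩ := exists_min_below hA
      rw [← huniq1 M hMred.1 hMmin]
      exact hMsub
    have hmin2glob : ∀ B ∈ P2, m2 ⊆ B := by
      intro B hB
      obtain ⟨M, hMred, hMsub, hMmin⟩ := exists_min_below hB
      rw [← huniq2 M hMred.1 hMmin]
      exact hMsub
    by_cases hP1sing : ∀ A ∈ P1, A = m1
    · have hm1minP : ∀ X ∈ P1, X ⊆ m1 → X = m1 := fun X hX _ => hP1sing X hX
      have hredimg : red P = (joinT m1 : Set (Fin n) → _) '' red P2 := by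
        ext X
        constructor
        · intro hX
          have hXP := hX.1
          obtain ⟨hXA, hXB⟩ := (hmem X).mp hXP
          have hXA1 : proj1 X = m1 := hP1sing _ hXA
          have hXBred : proj2 X ∈ red P2 := by
            rcases (tensor_red_char X hXP).mp hX with ⟨-, h⟩ | ⟨-, h⟩
            · exact h
            · exact minimal_mem_red hXB h
          refine ⟨proj2 X, hXBred, ?_⟩
          rw [← hXA1]
          exact joinT_proj X
        · rintro ⟨B', hB', rfl⟩
          refine (tensor_red_char _ ?_).mpr (Or.inl ⟨?_, ?_⟩)
          · rw [hmem, proj1_joinT, proj2_joinT]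
            exact ⟨hm1P, hB'.1⟩
          · rw [proj1_joinT]
            exact hm1minP
          · rw [proj2_joinT]
            exact hB'
      have hch2 : IsChain (· ⊆ ·) (red P2) := by
        rw [hredimg] at hch
        exact (isChain_image _ _ (fun X _ Y _ => hsubL m1 X Y)).mp hch
      have hTeq : joinT m1 (proj2 T) = T := by
        rw [← hP1sing _ hTA]
        exact joinT_proj T
      rw [← hTeq, tensor_hgt_left hm1P hm1minP hTB,
        tensor_dwn_left hm1P hm1minP hTB,
        Set.ncard_image_of_injective _ (hinjL m1)]
      exact IHg.2.2 hch2 (proj2 T) hTB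
    · push_neg at hP1sing
      obtain ⟨A1, hA1, hA1ne⟩ := hP1sing
      have hP2sing : ∀ B ∈ P2, B = m2 := by
        by_contra hP2
        push_neg at hP2
        obtain ⟨B1, hB1, hB1ne⟩ := hP2
        have hss1 : m1 ⊂ A1 := ssubset_of_subset_of_ne (hmin1glob A1 hA1) (Ne.symm hA1ne)
        obtain ⟨x, hxA1, hxm1⟩ := Set.exists_of_ssubset hss1
        obtain ⟨R1, hR1red, hR1sub, hxlab⟩ := exists_red_below hA1 hxA1
        have hR1ne : R1 ≠ m1 := fun he => hxm1 (he ▸ hxlab.1)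
        have hss2 : m2 ⊂ B1 := ssubset_of_subset_of_ne (hmin2glob B1 hB1) (Ne.symm hB1ne)
        obtain ⟨y, hyB1, hym2⟩ := Set.exists_of_ssubset hss2
        obtain ⟨R2, hR2red, hR2sub, hylab⟩ := exists_red_below hB1 hyB1
        have hR2ne : R2 ≠ m2 := fun he => hym2 (he ▸ hylab.1)
        have hX1 : joinT R1 m2 ∈ red P := by
          refine (tensor_red_char _ ?_).mpr (Or.inr ⟨?_, ?_⟩)
          · rw [hmem, proj1_joinT, proj2_joinT]
            exact ⟨hR1red.1, hm2P⟩
          · rw [proj1_joinT]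
            exact hR1red
          · rw [proj2_joinT]
            exact hm2min
        have hX2 : joinT m1 R2 ∈ red P := by
          refine (tensor_red_char _ ?_).mpr (Or.inl ⟨?_, ?_⟩)
          · rw [hmem, proj1_joinT, proj2_joinT]
            exact ⟨hm1P, hR2red.1⟩
          · rw [proj1_joinT]
            exact hm1min
          · rw [proj2_joinT]
            exact hR2red
        have hne12 : joinT R1 m2 ≠ joinT m1 R2 := by
          intro he
          have h2 := congrArg proj1 he
          rw [proj1_joinT, proj1_joinT] at h2
          exact hR1ne h2
        rcases hch hX1 hX2 hne12 with hle | hle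
        · have h2 := (proj_subset_of_subset hle).1
          rw [proj1_joinT, proj1_joinT] at h2
          exact hR1ne (hm1min R1 hR1red.1 h2)
        · have h2 := (proj_subset_of_subset hle).2
          rw [proj2_joinT, proj2_joinT] at h2
          exact hR2ne (hm2min R2 hR2red.1 h2)
      have hm2minP : ∀ X ∈ P2, X ⊆ m2 → X = m2 := fun X hX _ => hP2sing X hX
      have hredimg : red P = (fun A' => joinT A' m2) '' red P1 := by
        ext X
        constructor
        · intro hX
          have hXP := hX.1
          obtain ⟨hXA, hXB⟩ := (hmem X).mp hXP
          have hXB2 : proj2 X = m2 := hP2sing _ hXB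
          have hXAred : proj1 X ∈ red P1 := by
            rcases (tensor_red_char X hXP).mp hX with ⟨h, -⟩ | ⟨h, -⟩
            · exact minimal_mem_red hXA h
            · exact h
          refine ⟨proj1 X, hXAred, ?_⟩
          show joinT (proj1 X) m2 = X
          rw [← hXB2]
          exact joinT_proj X
        · rintro ⟨A', hA', rfl⟩
          refine (tensor_red_char _ ?_).mpr (Or.inr ⟨?_, ?_⟩)
          · rw [hmem, proj1_joinT, proj2_joinT]
            exact ⟨hA'.1, hm2P⟩
          · rw [proj1_joinT]
            exact hA'
          · rw [proj2_joinT]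
            exact hm2minP
      have hch1 : IsChain (· ⊆ ·) (red P1) := by
        rw [hredimg] at hch
        exact (isChain_image _ _ (fun X _ Y _ => hsubR m2 X Y)).mp hch
      have hTeq : joinT (proj1 T) m2 = T := by
        rw [← hP2sing _ hTB]
        exact joinT_proj T
      rw [← hTeq, tensor_hgt_right hTA hm2minP hm2P,
        tensor_dwn_right hTA hm2minP hm2P,
        Set.ncard_image_of_injective _ (hinjR m2)]
      exact IHf.2.2 hch1 (proj1 T) hTA

end InvTensor


section Final

theorem inv_one : Inv 1 (fun _ => true) := by
  have hP : structPoset (fun _ => true : Str 1 → Bool) = {(∅ : Set (Fin 1))} := by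
    ext T
    show mobius _ T ≠ 0 ↔ _
    rw [mobius_one T]
    rcases eq_or_ne T ∅ with rfl | hne
    · simp
    · simp [hne]
  have hmem : (∅ : Set (Fin 1)) ∈ structPoset (fun _ => true : Str 1 → Bool) := by
    rw [hP]
    rfl
  have hsingle : ∀ X ∈ structPoset (fun _ => true : Str 1 → Bool), X = ∅ := by
    intro X hX
    rw [hP] at hX
    exact hX
  have hdwn : dwn (structPoset (fun _ => true : Str 1 → Bool)) ∅ = {(∅ : Set (Fin 1))} := by
    ext X
    constructor
    · rintro ⟨hXr, hXs⟩
      exact Set.subset_empty_iff.mp hXs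
    · rintro rfl
      exact ⟨empty_mem_red hmem, le_refl _⟩
  have hchain : IsChain (· ⊆ ·) ({(∅ : Set (Fin 1))} : Set (Set (Fin 1))) := by
    intro x hx y hy hne
    rw [Set.mem_singleton_iff] at hx hy
    exact absurd (hx.trans hy.symm) hne
  have hgt0 : hgt (structPoset (fun _ => true : Str 1 → Bool)) ∅ = 0 :=
    hgt_eq_zero hmem (fun X _ h => Set.subset_empty_iff.mp h)
  refine ⟨?_, ?_, ?_⟩
  · left
    rw [mobius_one, if_neg]
    intro he
    have : (0 : Fin 1) ∈ (Set.univ : Set (Fin 1)) := Set.mem_univ _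
    rw [he] at this
    exact this
  · intro S hS
    have hS0 : S = ∅ := hsingle S hS.1
    subst hS0
    refine ⟨Or.inl ?_, fun _ => ?_⟩
    · rw [hdwn]
      exact hchain
    · rw [hdwn, Set.ncard_singleton, hgt0]
  · intro _ T hT
    have hT0 : T = ∅ := hsingle T hT
    subst hT0
    rw [hdwn, Set.ncard_singleton, hgt0]

theorem isType_inv {n : ℕ} {f : Str n → Bool} (hf : IsType n f) : Inv n f := by
  induction hf with
  | one => exact inv_one
  | dual h ih => exact inv_star (isType_pos h) (isType_theta h) ih
  | perm σ h ih => exact inv_perm σ ih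
  | tens h1 h2 ih1 ih2 => exact inv_tensor ih1 ih2

end Final

/-- for `S ∈ 𝓟_f^0`, at least one of `S^↓`, `S^↑` is a chain; if `S^↓` is
a chain, then `ρ_f(S)` equals its length `|S^↓| − 1`. -/
theorem stmt17 {n : ℕ} (f : Str n → Bool) (hf : IsType n f)
    (S : Set (Fin n)) (hS : S ∈ reducedPoset f) :
    (IsChain (· ⊆ ·) (downSet f S) ∨ IsChain (· ⊆ ·) (upSet f S)) ∧
    (IsChain (· ⊆ ·) (downSet f S) → rank f S = (downSet f S).ncard - 1) := by
  have hInv := isType_inv hf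
  exact hInv.2.1 S hS

end HOT
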